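/- arXiv:2605.21860 — 5 statements merged into one kernel-verified Lean document; each statement's English description precedes it below -/
import Mathlib

section
/- Let A and B be independent uniformly random k-subsets of {1,…,n} and let H = |A ∩ B|. Then for every λ ≥ 0, E[exp(λ(H - k²/n))] ≤ exp((k²/n)(e^λ - 1 - λ)). -/
open scoped Classical
open Finset

theorem aux1 (n k : ℕ) (hk : k ≤ n) : ∀ s, s ≤ k → n ^ s * (n - s).choose (k - s) ≤ k ^ s * n.choose k := by
  intro s
  induction s with
  | zero => simp
  | succ s ih =>
    intro hs
    have hsk : s < k := hs
    have hsn : s < n := lt_of_lt_of_le hsk hk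
    have hpos : 0 < n - s := Nat.sub_pos_of_lt hsn
    have hid : (n - s) * (n - s - 1).choose (k - s - 1) = (n - s).choose (k - s) * (k - s) := by
      have h1 : n - s - 1 + 1 = n - s := by omega
      have h2 : k - s - 1 + 1 = k - s := by omega
      have := Nat.add_one_mul_choose_eq (n - s - 1) (k - s - 1)
      simpa [Nat.succ_eq_add_one, h1, h2] using this
    refine Nat.le_of_mul_le_mul_left ?_ hpos
    have e1 : n - (s+1) = n - s - 1 := by omega
    have e2 : k - (s+1) = k - s - 1 := by omega
    calc (n - s) * (n ^ (s+1) * (n - (s+1)).choose (k - (s+1)))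
        = n ^ (s+1) * ((n - s) * (n - s - 1).choose (k - s - 1)) := by rw [e1, e2]; ring
      _ = n ^ (s+1) * ((n - s).choose (k - s) * (k - s)) := by rw [hid]
      _ = (n * (k - s)) * (n ^ s * (n - s).choose (k - s)) := by ring
      _ ≤ (k * (n - s)) * (n ^ s * (n - s).choose (k - s)) := by
          apply Nat.mul_le_mul_right
          have hZ : (k:ℤ) * s ≤ (n:ℤ) * s := by
            have : (k:ℤ) ≤ (n:ℤ) := by exact_mod_cast hk
            nlinarith [Int.ofNat_nonneg s]
          zify [Nat.le_of_lt hsk, Nat.le_of_lt hsn]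
          nlinarith [hZ]
      _ ≤ (k * (n - s)) * (k ^ s * n.choose k) := by
          exact Nat.mul_le_mul_left _ (ih (le_of_lt hsk))
      _ = (n - s) * (k ^ (s+1) * n.choose k) := by ring

theorem hcount (n s k : ℕ) (hs : s ≤ k) (R : Finset (Fin n)) (hR : R.card = s) :
    ((Finset.powersetCard k (Finset.univ : Finset (Fin n))).filter (fun A => R ⊆ A)).card
      = (n - s).choose (k - s) := by
  have : ((Finset.powersetCard k (Finset.univ : Finset (Fin n))).filter (fun A => R ⊆ A)).card
      = (Finset.powersetCard (k - s) Rᶜ).card := by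
    apply Finset.card_bij' (fun A _ => A \ R) (fun C _ => C ∪ R)
    · intro A hA
      simp only [mem_filter, Finset.mem_powersetCard] at hA
      obtain ⟨⟨-, hAk⟩, hRA⟩ := hA
      rw [Finset.mem_powersetCard]
      constructor
      · intro x hx
        simp only [Finset.mem_compl]
        exact fun hxR => (Finset.mem_sdiff.mp hx).2 hxR
      · rw [Finset.card_sdiff_of_subset hRA, hAk, hR]
    · intro C hC
      rw [Finset.mem_powersetCard] at hC
      obtain ⟨hCR, hCk⟩ := hC
      have hdisj : Disjoint C R := by
        rw [Finset.disjoint_right]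
        intro a haR haC
        exact (Finset.mem_compl.mp (hCR haC)) haR
      simp only [mem_filter, Finset.mem_powersetCard]
      refine ⟨⟨Finset.subset_univ _, ?_⟩, Finset.subset_union_right⟩
      rw [Finset.card_union_of_disjoint hdisj, hCk, hR]
      omega
    · intro A hA
      simp only [mem_filter] at hA
      exact Finset.sdiff_union_of_subset hA.2
    · intro C hC
      rw [Finset.mem_powersetCard] at hC
      have hdisj : Disjoint C R := by
        rw [Finset.disjoint_right]
        intro a haR haC
        exact (Finset.mem_compl.mp (hC.1 haC)) haR
      rw [Finset.union_sdiff_right, Finset.sdiff_eq_self_of_disjoint hdisj]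
  rw [this, Finset.card_powersetCard, Finset.card_compl, hR, Fintype.card_fin]

/-- MGF bound for the intersection of two independent uniform `k`-subsets of `[n]`:
with `H = |A ∩ B|`, for every `λ ≥ 0`,
`E[exp(λ(H - k²/n))] ≤ exp((k²/n)(e^λ - 1 - λ))`.
The expectation is written as an average over all pairs of `k`-subsets. -/
theorem stmt3 (n k : ℕ) (hn : 0 < n) (hk : k ≤ n) (lam : ℝ) (hlam : 0 ≤ lam) :
    (1 / ((n.choose k : ℝ)) ^ 2) *
        ∑ A ∈ Finset.powersetCard k (Finset.univ : Finset (Fin n)),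
          ∑ B ∈ Finset.powersetCard k (Finset.univ : Finset (Fin n)),
            Real.exp (lam * (((A ∩ B).card : ℝ) - (k : ℝ) ^ 2 / n)) ≤
      Real.exp ((k : ℝ) ^ 2 / n * (Real.exp lam - 1 - lam)) := by
  set P := Finset.powersetCard k (Finset.univ : Finset (Fin n)) with hPdef
  have hNpos : 0 < (n.choose k : ℝ) := by exact_mod_cast Nat.choose_pos hk
  set N : ℝ := (n.choose k : ℝ) with hNdef
  set μ : ℝ := (k : ℝ) ^ 2 / n with hμdef
  have hμ : 0 ≤ μ := by positivity
  set x : ℝ := Real.exp lam - 1 with hxdef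
  have hx : 0 ≤ x := by
    have : (1:ℝ) ≤ Real.exp lam := Real.one_le_exp hlam
    simp only [hxdef]; linarith
  -- step 1 : binomial expansion of exp per pair
  have hpair : ∀ A ∈ P, ∀ B ∈ P, Real.exp (lam * ((A ∩ B).card : ℝ))
      = ∑ s ∈ Finset.range (k+1), x ^ s * (((A ∩ B).card.choose s : ℕ) : ℝ) := by
    intro A hA B hB
    have hAk : A.card = k := (Finset.mem_powersetCard.mp hA).2
    have hcard : (A ∩ B).card ≤ k := hAk ▸ Finset.card_le_card Finset.inter_subset_left
    rw [mul_comm, Real.exp_nat_mul]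
    have h1 : Real.exp lam = x + 1 := by simp [hxdef]
    rw [h1, add_pow]
    simp only [one_pow, mul_one]
    refine Finset.sum_subset (Finset.range_subset_range.mpr (Nat.succ_le_succ hcard)) ?_
    intro s _ hs
    have : (A ∩ B).card < s := by
      simp only [Finset.mem_range, not_lt] at hs; omega
    rw [Nat.choose_eq_zero_of_lt this]
    simp
  -- step 2 : binomial coefficient as sum over subsets
  have hchoose : ∀ (A B : Finset (Fin n)) (s : ℕ), (((A ∩ B).card.choose s : ℕ) : ℝ)
      = ∑ R ∈ Finset.powersetCard s (Finset.univ : Finset (Fin n)),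
          (if R ⊆ A then (1:ℝ) else 0) * (if R ⊆ B then (1:ℝ) else 0) := by
    intro A B s
    have h1 : Finset.powersetCard s (A ∩ B)
        = (Finset.powersetCard s (Finset.univ : Finset (Fin n))).filter
            (fun R => R ⊆ A ∧ R ⊆ B) := by
      ext R
      simp only [Finset.mem_powersetCard, Finset.mem_filter, Finset.subset_inter_iff,
        Finset.subset_univ, true_and]
      tauto
    calc (((A ∩ B).card.choose s : ℕ) : ℝ)
        = ((Finset.powersetCard s (A ∩ B)).card : ℝ) := by rw [Finset.card_powersetCard]
      _ = ∑ R ∈ Finset.powersetCard s (Finset.univ : Finset (Fin n)),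
            if R ⊆ A ∧ R ⊆ B then (1:ℝ) else 0 := by
          rw [h1, ← Finset.sum_boole]
      _ = _ := by
          refine Finset.sum_congr rfl fun R _ => ?_
          by_cases hA : R ⊆ A <;> by_cases hB : R ⊆ B <;> simp [hA, hB]
  -- step 3 : counting sets containing R
  have hcnt : ∀ s, s ≤ k → ∀ R ∈ Finset.powersetCard s (Finset.univ : Finset (Fin n)),
      (∑ A ∈ P, if R ⊆ A then (1:ℝ) else 0) = (((n - s).choose (k - s) : ℕ) : ℝ) := by
    intro s hs R hR
    rw [Finset.sum_boole, hPdef, hcount n s k hs R (Finset.mem_powersetCard.mp hR).2]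
  -- core bound
  have core : (∑ A ∈ P, ∑ B ∈ P, Real.exp (lam * ((A ∩ B).card : ℝ)))
      ≤ N ^ 2 * Real.exp (μ * x) := by
    calc ∑ A ∈ P, ∑ B ∈ P, Real.exp (lam * ((A ∩ B).card : ℝ))
        = ∑ A ∈ P, ∑ B ∈ P, ∑ s ∈ Finset.range (k+1),
            x ^ s * (((A ∩ B).card.choose s : ℕ) : ℝ) :=
          Finset.sum_congr rfl fun A hA => Finset.sum_congr rfl fun B hB => hpair A hA B hB
      _ = ∑ A ∈ P, ∑ s ∈ Finset.range (k+1), ∑ B ∈ P,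
            x ^ s * (((A ∩ B).card.choose s : ℕ) : ℝ) :=
          Finset.sum_congr rfl fun A _ => Finset.sum_comm
      _ = ∑ s ∈ Finset.range (k+1), ∑ A ∈ P, ∑ B ∈ P,
            x ^ s * (((A ∩ B).card.choose s : ℕ) : ℝ) := Finset.sum_comm
      _ = ∑ s ∈ Finset.range (k+1),
            x ^ s * (((n.choose s : ℕ) : ℝ) * (((n - s).choose (k - s) : ℕ) : ℝ) ^ 2) := by
          refine Finset.sum_congr rfl fun s hs => ?_
          have hsk : s ≤ k := by
            have := Finset.mem_range.mp hs; omega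
          simp only [← Finset.mul_sum]
          congr 1
          calc ∑ A ∈ P, ∑ B ∈ P, (((A ∩ B).card.choose s : ℕ) : ℝ)
              = ∑ A ∈ P, ∑ B ∈ P, ∑ R ∈ Finset.powersetCard s (Finset.univ : Finset (Fin n)),
                  (if R ⊆ A then (1:ℝ) else 0) * (if R ⊆ B then (1:ℝ) else 0) :=
                Finset.sum_congr rfl fun A _ => Finset.sum_congr rfl fun B _ => hchoose A B s
            _ = ∑ A ∈ P, ∑ R ∈ Finset.powersetCard s (Finset.univ : Finset (Fin n)), ∑ B ∈ P,
                  (if R ⊆ A then (1:ℝ) else 0) * (if R ⊆ B then (1:ℝ) else 0) :=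
                Finset.sum_congr rfl fun A _ => Finset.sum_comm
            _ = ∑ R ∈ Finset.powersetCard s (Finset.univ : Finset (Fin n)), ∑ A ∈ P, ∑ B ∈ P,
                  (if R ⊆ A then (1:ℝ) else 0) * (if R ⊆ B then (1:ℝ) else 0) := Finset.sum_comm
            _ = ∑ R ∈ Finset.powersetCard s (Finset.univ : Finset (Fin n)),
                  (∑ A ∈ P, if R ⊆ A then (1:ℝ) else 0) * (∑ B ∈ P, if R ⊆ B then (1:ℝ) else 0) :=
                Finset.sum_congr rfl fun R _ => (Finset.sum_mul_sum P P _ _).symm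
            _ = ∑ R ∈ Finset.powersetCard s (Finset.univ : Finset (Fin n)),
                  (((n - s).choose (k - s) : ℕ) : ℝ) * (((n - s).choose (k - s) : ℕ) : ℝ) := by
                refine Finset.sum_congr rfl fun R hR => ?_
                rw [hcnt s hsk R hR]
            _ = (((n.choose s : ℕ) : ℝ) * (((n - s).choose (k - s) : ℕ) : ℝ) ^ 2) := by
                rw [Finset.sum_const, Finset.card_powersetCard, Finset.card_univ,
                  Fintype.card_fin, nsmul_eq_mul]
                ring
      _ ≤ ∑ s ∈ Finset.range (k+1), N ^ 2 * ((μ * x) ^ s / (s.factorial : ℝ)) := by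
          refine Finset.sum_le_sum fun s hs => ?_
          have hsk : s ≤ k := by
            have := Finset.mem_range.mp hs; omega
          have h2 : s.factorial * n.choose s ≤ n ^ s := by
            rw [← Nat.descFactorial_eq_factorial_mul_choose]
            exact Nat.descFactorial_le_pow n s
          have keynat : (s.factorial * n.choose s) * (n ^ s * (n - s).choose (k - s)) ^ 2
              ≤ n ^ s * (k ^ s * n.choose k) ^ 2 :=
            Nat.mul_le_mul h2 (Nat.pow_le_pow_left (aux1 n k hk s hsk) 2)
          have keyR : ((s.factorial : ℝ) * ((n.choose s : ℕ) : ℝ))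
                * (((n:ℝ) ^ s) * (((n - s).choose (k - s) : ℕ) : ℝ)) ^ 2
              ≤ (n:ℝ) ^ s * (((k:ℝ) ^ s) * N) ^ 2 := by
            rw [hNdef]; exact_mod_cast keynat
          have hμs : μ ^ s = ((k:ℝ) ^ s) ^ 2 / ((n:ℝ) ^ s) := by
            rw [hμdef, div_pow, ← pow_mul, ← pow_mul, mul_comm 2 s]
          have hmain : ((n.choose s : ℕ) : ℝ) * (((n - s).choose (k - s) : ℕ) : ℝ) ^ 2
              ≤ N ^ 2 * μ ^ s / (s.factorial : ℝ) := by
            have hgoal : ((n.choose s : ℕ) : ℝ) * (((n - s).choose (k - s) : ℕ) : ℝ) ^ 2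
                * ((s.factorial : ℝ) * (n:ℝ) ^ s) ≤ N ^ 2 * ((k:ℝ) ^ s) ^ 2 := by
              refine le_of_mul_le_mul_right ?_ (show (0:ℝ) < (n:ℝ) ^ s by positivity)
              calc ((n.choose s : ℕ) : ℝ) * (((n - s).choose (k - s) : ℕ) : ℝ) ^ 2
                    * ((s.factorial : ℝ) * (n:ℝ) ^ s) * (n:ℝ) ^ s
                  = ((s.factorial : ℝ) * ((n.choose s : ℕ) : ℝ))
                      * (((n:ℝ) ^ s) * (((n - s).choose (k - s) : ℕ) : ℝ)) ^ 2 := by ring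
                _ ≤ (n:ℝ) ^ s * (((k:ℝ) ^ s) * N) ^ 2 := keyR
                _ = N ^ 2 * ((k:ℝ) ^ s) ^ 2 * (n:ℝ) ^ s := by ring
            have hrw : N ^ 2 * (((k:ℝ) ^ s) ^ 2 / (n:ℝ) ^ s) / (s.factorial : ℝ)
                = N ^ 2 * ((k:ℝ) ^ s) ^ 2 / ((n:ℝ) ^ s * (s.factorial : ℝ)) := by
              field_simp
            rw [hμs, hrw, le_div_iff₀ (by positivity : (0:ℝ) < (n:ℝ) ^ s * (s.factorial : ℝ))]
            linear_combination hgoal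
          calc x ^ s * (((n.choose s : ℕ) : ℝ) * (((n - s).choose (k - s) : ℕ) : ℝ) ^ 2)
              ≤ x ^ s * (N ^ 2 * μ ^ s / (s.factorial : ℝ)) :=
                mul_le_mul_of_nonneg_left hmain (pow_nonneg hx s)
            _ = N ^ 2 * ((μ * x) ^ s / (s.factorial : ℝ)) := by
                rw [mul_pow]; ring
      _ = N ^ 2 * ∑ s ∈ Finset.range (k+1), (μ * x) ^ s / (s.factorial : ℝ) := by
          rw [Finset.mul_sum]
      _ ≤ N ^ 2 * Real.exp (μ * x) := by
          have := Real.sum_le_exp_of_nonneg (mul_nonneg hμ hx) (k+1)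
          exact mul_le_mul_of_nonneg_left this (by positivity)
  -- final assembly
  have hfact : ∀ A B : Finset (Fin n),
      Real.exp (lam * (((A ∩ B).card : ℝ) - μ))
        = Real.exp (lam * ((A ∩ B).card : ℝ)) * Real.exp (-(lam * μ)) := by
    intro A B; rw [← Real.exp_add]; ring_nf
  calc (1 / N ^ 2) * ∑ A ∈ P, ∑ B ∈ P, Real.exp (lam * (((A ∩ B).card : ℝ) - μ))
      = (Real.exp (-(lam * μ)) / N ^ 2)
          * ∑ A ∈ P, ∑ B ∈ P, Real.exp (lam * ((A ∩ B).card : ℝ)) := by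
        simp_rw [hfact, ← Finset.sum_mul]
        ring
    _ ≤ (Real.exp (-(lam * μ)) / N ^ 2) * (N ^ 2 * Real.exp (μ * x)) :=
        mul_le_mul_of_nonneg_left core (by positivity)
    _ = Real.exp (μ * x - lam * μ) := by
        have hcancel : (Real.exp (-(lam * μ)) / N ^ 2) * (N ^ 2 * Real.exp (μ * x))
            = Real.exp (-(lam * μ)) * Real.exp (μ * x) := by
          field_simp
        rw [hcancel, ← Real.exp_add]
        congr 1
        ring
    _ = Real.exp (μ * (x - lam)) := by congr 1; ring
end

section
/- There exists a universal constant c > 0 such that for every integer n ≥ 1 and every r ∈ {0, 1, …, n}, the probability that a Binomial(n, r/n) random variable equals exactly r is at least c/√(r+1). -/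
open Real Filter Nat

private lemma sqrtpi_le_stirling (n : ℕ) : Real.sqrt Real.pi ≤ Stirling.stirlingSeq (n + 1) := by
  refine le_of_tendsto (Stirling.tendsto_stirlingSeq_sqrt_pi.comp (tendsto_add_atTop_nat 1)) ?_
  filter_upwards [eventually_ge_atTop n] with m hm
  exact Stirling.stirlingSeq'_antitone hm

private lemma stirling_le (n : ℕ) :
    Stirling.stirlingSeq (n + 1) ≤ Real.exp 1 / Real.sqrt 2 := by
  have h := Stirling.stirlingSeq'_antitone (Nat.zero_le n)
  simpa [Stirling.stirlingSeq_one] using h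

private lemma fac_eq (k : ℕ) :
    ((k + 1)! : ℝ) = Stirling.stirlingSeq (k + 1) *
      (Real.sqrt (2 * (k + 1 : ℕ)) * (((k + 1 : ℕ) : ℝ) / Real.exp 1) ^ (k + 1)) := by
  rw [Stirling.stirlingSeq]
  have h : Real.sqrt (2 * (k + 1 : ℕ)) * (((k + 1 : ℕ) : ℝ) / Real.exp 1) ^ (k + 1) ≠ 0 := by
    positivity
  field_simp

private lemma fac_low (k : ℕ) (hk : 1 ≤ k) :
    Real.sqrt (2 * Real.pi) * Real.sqrt k * (k : ℝ) ^ k / Real.exp 1 ^ k ≤ (k ! : ℝ) := by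
  obtain ⟨j, rfl⟩ : ∃ j, k = j + 1 := ⟨k - 1, by omega⟩
  have hd : (0 : ℝ) ≤ Real.sqrt (2 * (j + 1 : ℕ)) * (((j + 1 : ℕ) : ℝ) / Real.exp 1) ^ (j + 1) := by
    positivity
  have h1 := mul_le_mul_of_nonneg_right (sqrtpi_le_stirling j) hd
  rw [← fac_eq j] at h1
  refine le_trans (le_of_eq ?_) h1
  have e1 : Real.sqrt (2 * Real.pi) = Real.sqrt 2 * Real.sqrt Real.pi :=
    Real.sqrt_mul two_pos.le _
  have e2 : Real.sqrt (2 * ((j + 1 : ℕ) : ℝ)) = Real.sqrt 2 * Real.sqrt ((j + 1 : ℕ) : ℝ) :=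
    Real.sqrt_mul two_pos.le _
  rw [e1, e2, div_pow]
  ring

private lemma fac_high (k : ℕ) (hk : 1 ≤ k) :
    (k ! : ℝ) ≤ Real.exp 1 * Real.sqrt k * (k : ℝ) ^ k / Real.exp 1 ^ k := by
  obtain ⟨j, rfl⟩ : ∃ j, k = j + 1 := ⟨k - 1, by omega⟩
  have hd : (0 : ℝ) ≤ Real.sqrt (2 * (j + 1 : ℕ)) * (((j + 1 : ℕ) : ℝ) / Real.exp 1) ^ (j + 1) := by
    positivity
  have h1 := mul_le_mul_of_nonneg_right (stirling_le j) hd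
  rw [← fac_eq j] at h1
  refine h1.trans (le_of_eq ?_)
  have h2 : Real.sqrt 2 ≠ 0 := by positivity
  have e2 : Real.sqrt (2 * ((j + 1 : ℕ) : ℝ)) = Real.sqrt 2 * Real.sqrt ((j + 1 : ℕ) : ℝ) :=
    Real.sqrt_mul two_pos.le _
  rw [div_pow, e2]
  field_simp

/-- Binomial point-mass anti-concentration: there is a universal constant `c > 0` such that
for every `n ≥ 1` and `r ∈ {0,…,n}`, `P(Bin(n, r/n) = r) ≥ c/√(r+1)`. -/
theorem stmt5 : ∃ c : ℝ, 0 < c ∧ ∀ n : ℕ, 1 ≤ n → ∀ r : ℕ, r ≤ n →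
    c / Real.sqrt ((r : ℝ) + 1) ≤
      (n.choose r : ℝ) * ((r : ℝ) / n) ^ r * (1 - (r : ℝ) / n) ^ (n - r) := by
  set E := Real.exp 1 with hE
  have hE2 : (2 : ℝ) ≤ E := by
    have := Real.add_one_le_exp 1
    linarith
  have hEpos : (0 : ℝ) < E := by linarith
  refine ⟨Real.sqrt (2 * Real.pi) / E ^ 2, by positivity, ?_⟩
  set c := Real.sqrt (2 * Real.pi) / E ^ 2 with hc
  have hsq3 : Real.sqrt (2 * Real.pi) ≤ 3 := by
    have h9 : (2 : ℝ) * Real.pi ≤ 9 := by nlinarith [Real.pi_le_four]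
    calc Real.sqrt (2 * Real.pi) ≤ Real.sqrt 9 := Real.sqrt_le_sqrt h9
      _ = 3 := by
          rw [show (9 : ℝ) = 3 ^ 2 by norm_num, Real.sqrt_sq (by norm_num : (0:ℝ) ≤ 3)]
  have hc1 : c ≤ 1 := by
    rw [hc, div_le_one (by positivity)]
    nlinarith
  have hcpos : 0 < c := by positivity
  intro n hn r hrn
  have hNpos : (0 : ℝ) < n := by exact_mod_cast hn
  -- edge case r = 0
  rcases Nat.eq_zero_or_pos r with rfl | hr1
  · simp only [Nat.choose_zero_right, Nat.cast_one, Nat.cast_zero, zero_div, pow_zero,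
      sub_zero, one_pow, mul_one, one_mul, zero_add, Real.sqrt_one, div_one]
    exact hc1
  -- edge case r = n
  rcases eq_or_lt_of_le hrn with rfl | hrlt
  · have : ((r : ℝ) / r) = 1 := div_self (by positivity)
    simp only [Nat.choose_self, Nat.cast_one, this, one_pow, sub_self, Nat.sub_self, pow_zero,
      mul_one, one_mul]
    have hs : (1 : ℝ) ≤ Real.sqrt ((r : ℝ) + 1) := by
      have h := Real.sqrt_le_sqrt (show (1:ℝ) ≤ (r:ℝ)+1 by nlinarith [Nat.cast_nonneg (α := ℝ) r])
      simpa using h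
    calc c / Real.sqrt ((r : ℝ) + 1) ≤ c / 1 := by gcongr
      _ ≤ 1 := by simpa using hc1
  -- main case: 1 ≤ r < n
  set m := n - r with hm
  have hm1 : 1 ≤ m := by omega
  have hrm : r + m = n := by omega
  have hMcast : (m : ℝ) = (n : ℝ) - r := by
    rw [hm]; push_cast [Nat.cast_sub hrn]; ring
  have hRpos : (0 : ℝ) < r := by exact_mod_cast hr1
  have hMpos : (0 : ℝ) < m := by exact_mod_cast hm1
  have hMN : (m : ℝ) ≤ (n : ℝ) := by exact_mod_cast Nat.sub_le n r
  have h1sub : (1 : ℝ) - (r : ℝ) / n = (m : ℝ) / n := by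
    rw [hMcast]; field_simp
  have hCh : (n.choose r : ℝ) * ((r ! : ℝ) * (m ! : ℝ)) = (n ! : ℝ) := by
    have := Nat.choose_mul_factorial_mul_factorial hrn
    push_cast [← this]
    ring
  have hChoose : (n.choose r : ℝ) = (n ! : ℝ) / ((r ! : ℝ) * (m ! : ℝ)) := by
    rw [eq_div_iff (by positivity)]
    exact hCh
  rw [h1sub, hChoose, div_pow, div_pow]
  -- goal: c / √(r+1) ≤ n! / (r! * m!) * (r^r / n^r) * (m^m / n^m)
  have key : (n ! : ℝ) / ((r ! : ℝ) * (m ! : ℝ)) * ((r : ℝ) ^ r / (n : ℝ) ^ r) *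
      ((m : ℝ) ^ m / (n : ℝ) ^ m) =
      (n ! : ℝ) * ((r : ℝ) ^ r * (m : ℝ) ^ m) /
        ((r ! : ℝ) * (m ! : ℝ) * ((n : ℝ) ^ r * (n : ℝ) ^ m)) := by
    field_simp
  rw [key]
  have hsqR : (0 : ℝ) < Real.sqrt r := Real.sqrt_pos.mpr hRpos
  have hsqM : (0 : ℝ) < Real.sqrt m := Real.sqrt_pos.mpr hMpos
  have hsqN : (0 : ℝ) < Real.sqrt n := Real.sqrt_pos.mpr hNpos
  have hsqR1 : (0 : ℝ) < Real.sqrt ((r : ℝ) + 1) := Real.sqrt_pos.mpr (by positivity)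
  calc c / Real.sqrt ((r : ℝ) + 1)
      = Real.sqrt (2 * Real.pi) * Real.sqrt n /
          (E ^ 2 * (Real.sqrt ((r : ℝ) + 1) * Real.sqrt n)) := by
        rw [hc, div_div]
        rw [mul_comm (E ^ 2) (Real.sqrt ((r : ℝ) + 1) * Real.sqrt n)]
        rw [show Real.sqrt ((r:ℝ)+1) * Real.sqrt n * E ^ 2
            = (E ^ 2 * Real.sqrt ((r:ℝ)+1)) * Real.sqrt n from by ring]
        rw [← mul_div_mul_right _ (E ^ 2 * Real.sqrt ((r:ℝ)+1)) hsqN.ne']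
    _ ≤ Real.sqrt (2 * Real.pi) * Real.sqrt n / (E ^ 2 * (Real.sqrt r * Real.sqrt m)) := by
        apply div_le_div_of_nonneg_left (by positivity) (by positivity)
        have h1 : Real.sqrt r ≤ Real.sqrt ((r : ℝ) + 1) := Real.sqrt_le_sqrt (by linarith)
        have h2 : Real.sqrt m ≤ Real.sqrt n := Real.sqrt_le_sqrt hMN
        have := mul_le_mul h1 h2 hsqM.le hsqR1.le
        nlinarith
    _ = (Real.sqrt (2 * Real.pi) * Real.sqrt n * (n : ℝ) ^ n / E ^ n) *
          ((r : ℝ) ^ r * (m : ℝ) ^ m) /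
        ((E * Real.sqrt r * (r : ℝ) ^ r / E ^ r) * (E * Real.sqrt m * (m : ℝ) ^ m / E ^ m) *
          ((n : ℝ) ^ r * (n : ℝ) ^ m)) := by
        have hEn : E ^ r * E ^ m = E ^ n := by rw [← pow_add, hrm]
        have hNn : (n : ℝ) ^ r * (n : ℝ) ^ m = (n : ℝ) ^ n := by rw [← pow_add, hrm]
        rw [hNn]
        field_simp
        rw [← hEn]
    _ ≤ (n ! : ℝ) * ((r : ℝ) ^ r * (m : ℝ) ^ m) /
        ((r ! : ℝ) * (m ! : ℝ) * ((n : ℝ) ^ r * (n : ℝ) ^ m)) := by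
        apply div_le_div₀ (by positivity)
        · apply mul_le_mul_of_nonneg_right (fac_low n hn) (by positivity)
        · positivity
        · apply mul_le_mul_of_nonneg_right _ (by positivity)
          exact mul_le_mul (fac_high r hr1) (fac_high m hm1) (by positivity) (by positivity)
end

section
/- Suppose X_1,…,X_n, X_1',…,X_n' are independent with X_i' identically distributed to X_i for every i. Let X = (X_1,…,X_n) and X^(i) be X with coordinate i replaced by X_i'. If f : 𝒳^n → ℝ^d is measurable with E‖f(X)‖² < ∞, then E[‖f(X) - E f(X)‖²] ≤ (1/2) Σ_{i=1}^n E[‖f(X) - f(X^(i))‖²]. -/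
open MeasureTheory

namespace EfronSteinAux

variable {𝒳 : Type*} [MeasurableSpace 𝒳] {n : ℕ}

/-- Merge: take coordinate from second vector where `s` is true. -/
def F (s : Fin n → Bool) (p : (Fin n → 𝒳) × (Fin n → 𝒳)) : Fin n → 𝒳 :=
  fun k => if s k then p.2 k else p.1 k

/-- Swap the coordinates in `s` between the two vectors. -/
def T (s : Fin n → Bool) (p : (Fin n → 𝒳) × (Fin n → 𝒳)) :
    (Fin n → 𝒳) × (Fin n → 𝒳) :=
  (F s p, F s p.swap)

lemma measurable_F (s : Fin n → Bool) : Measurable (F (𝒳 := 𝒳) s) := by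
  refine measurable_pi_iff.2 fun k => ?_
  unfold F
  by_cases h : s k = true <;> simp only [h, if_true, if_false, Bool.false_eq_true]
  · exact (measurable_pi_apply k).comp measurable_snd
  · exact (measurable_pi_apply k).comp measurable_fst

lemma measurable_T (s : Fin n → Bool) : Measurable (T (𝒳 := 𝒳) s) :=
  (measurable_F s).prodMk ((measurable_F s).comp measurable_swap)

lemma mp_fst {α : Type*} [MeasurableSpace α] {μ : Measure α} [IsProbabilityMeasure μ] :
    MeasurePreserving (Prod.fst : α × α → α) (μ.prod μ) μ :=
  ⟨measurable_fst, by simp⟩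

lemma mp_T (ν : Fin n → Measure 𝒳) [∀ i, IsProbabilityMeasure (ν i)] (s : Fin n → Bool) :
    MeasurePreserving (T (𝒳 := 𝒳) s) ((Measure.pi ν).prod (Measure.pi ν))
      ((Measure.pi ν).prod (Measure.pi ν)) := by
  have e := measurePreserving_arrowProdEquivProdArrow 𝒳 𝒳 (Fin n) ν ν
  have hP : MeasurePreserving
      (fun (a : Fin n → 𝒳 × 𝒳) (i : Fin n) => if s i then Prod.swap (a i) else a i)
      (Measure.pi fun i => (ν i).prod (ν i)) (Measure.pi fun i => (ν i).prod (ν i)) := by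
    refine measurePreserving_pi (fun i => (ν i).prod (ν i)) (fun i => (ν i).prod (ν i))
      (f := fun i (x : 𝒳 × 𝒳) => if s i then Prod.swap x else x) (fun i => ?_)
    cases hsi : s i
    · convert MeasurePreserving.id ((ν i).prod (ν i)) using 1; funext x; simp [hsi]
    · simpa [hsi] using Measure.measurePreserving_swap (μ := ν i) (ν := ν i)
  have hsymm := MeasurePreserving.symm _ e
  have hc := (e.comp hP).comp hsymm
  convert hc using 1
  funext p
  show T s p = (MeasurableEquiv.arrowProdEquivProdArrow 𝒳 𝒳 (Fin n))
      (fun i => if s i then Prod.swap (((MeasurableEquiv.arrowProdEquivProdArrow 𝒳 𝒳 (Fin n)).symm p) i)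
        else ((MeasurableEquiv.arrowProdEquivProdArrow 𝒳 𝒳 (Fin n)).symm p) i)
  simp only [MeasurableEquiv.arrowProdEquivProdArrow, Equiv.arrowProdEquivProdArrow,
    MeasurableEquiv.coe_mk, Equiv.coe_fn_mk, MeasurableEquiv.symm_mk, Equiv.coe_fn_symm_mk]
  refine Prod.ext ?_ ?_ <;> funext k <;>
    simp only [T, F, apply_ite Prod.fst, apply_ite Prod.snd, Prod.fst_swap, Prod.snd_swap] <;>
    cases hsk : s k <;> simp [hsk]

lemma mp_F (ν : Fin n → Measure 𝒳) [∀ i, IsProbabilityMeasure (ν i)] (s : Fin n → Bool) :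
    MeasurePreserving (F (𝒳 := 𝒳) s) ((Measure.pi ν).prod (Measure.pi ν)) (Measure.pi ν) :=
  mp_fst.comp (mp_T ν s)

/-- indicator of `{i}` -/
def s1 (i : Fin n) : Fin n → Bool := fun k => decide (k = i)

/-- indicator of `{k | k < m}` -/
def slt (m : ℕ) : Fin n → Bool := fun k => decide ((k : ℕ) < m)

lemma F_slt_zero (p : (Fin n → 𝒳) × (Fin n → 𝒳)) : F (slt 0) p = p.1 := by
  funext k; simp [F, slt]

lemma F_slt_n (p : (Fin n → 𝒳) × (Fin n → 𝒳)) : F (slt n) p = p.2 := by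
  funext k; simp [F, slt, k.isLt]

lemma F_s1 (i : Fin n) (p : (Fin n → 𝒳) × (Fin n → 𝒳)) :
    F (s1 i) p = Function.update p.1 i (p.2 i) := by
  funext k
  by_cases h : k = i
  · subst h; simp [F, s1]
  · simp [F, s1, h, Function.update_apply]

lemma F_T_self (s : Fin n → Bool) (p : (Fin n → 𝒳) × (Fin n → 𝒳)) :
    F s (T s p) = p.1 := by
  funext k
  simp only [T, F, Prod.fst_swap, Prod.snd_swap]
  cases hsk : s k <;> simp [hsk]

lemma F_slt_T_s1 (i : Fin n) (p : (Fin n → 𝒳) × (Fin n → 𝒳)) :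
    F (slt (i : ℕ)) (T (s1 i) p) = F (slt ((i : ℕ) + 1)) p := by
  funext k
  simp only [T, F, s1, slt, Prod.fst_swap, Prod.snd_swap, decide_eq_true_eq, Fin.ext_iff]
  split_ifs <;> first | rfl | omega

lemma F_slt1_T_s1 (i : Fin n) (p : (Fin n → 𝒳) × (Fin n → 𝒳)) :
    F (slt ((i : ℕ) + 1)) (T (s1 i) p) = F (slt (i : ℕ)) p := by
  funext k
  simp only [T, F, s1, slt, Prod.fst_swap, Prod.snd_swap, decide_eq_true_eq, Fin.ext_iff]
  split_ifs <;> first | rfl | omega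

lemma F_slt1_T_slt (i : Fin n) (p : (Fin n → 𝒳) × (Fin n → 𝒳)) :
    F (slt ((i : ℕ) + 1)) (T (slt (i : ℕ)) p) = F (s1 i) p := by
  funext k
  simp only [T, F, s1, slt, Prod.fst_swap, Prod.snd_swap, decide_eq_true_eq, Fin.ext_iff]
  split_ifs <;> first | rfl | omega

lemma mp_integral {α β : Type*} [MeasurableSpace α] [MeasurableSpace β] {μ : Measure α}
    {ρ : Measure β} {S : α → β} (hS : MeasurePreserving S μ ρ) {φ : β → ℝ}
    (hφ : AEStronglyMeasurable φ ρ) : ∫ x, φ (S x) ∂μ = ∫ y, φ y ∂ρ := by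
  rw [← hS.map_eq] at hφ ⊢
  exact (integral_map hS.measurable.aemeasurable hφ).symm

lemma mp_integrable {α β : Type*} [MeasurableSpace α] [MeasurableSpace β] {μ : Measure α}
    {ρ : Measure β} {S : α → β} (hS : MeasurePreserving S μ ρ) {φ : β → ℝ}
    (hφ : AEStronglyMeasurable φ ρ) (h : Integrable φ ρ) :
    Integrable (fun x => φ (S x)) μ := by
  rw [← hS.map_eq] at hφ h
  exact (integrable_map_measure hφ hS.measurable.aemeasurable).1 h

lemma l2_mul_integrable {α : Type*} [MeasurableSpace α] {μ : Measure α} {u v : α → ℝ}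
    (hu : MemLp u 2 μ) (hv : MemLp v 2 μ) : Integrable (fun x => u x * v x) μ := by
  have h1 : Integrable (fun x => u x ^ 2) μ := (memLp_two_iff_integrable_sq hu.1).1 hu
  have h2 : Integrable (fun x => v x ^ 2) μ := (memLp_two_iff_integrable_sq hv.1).1 hv
  refine Integrable.mono' (((h1.add h2).div_const 2)) (hu.1.mul hv.1)
    (Filter.Eventually.of_forall fun x => ?_)
  simp only [Pi.add_apply]
  rw [Real.norm_eq_abs, abs_mul]
  have h3 : u x * v x ≤ |u x| * |v x| := le_abs_self _ |>.trans (le_of_eq (abs_mul _ _)) |>.trans (le_refl _)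
  nlinarith [sq_nonneg (|u x| - |v x|), sq_abs (u x), sq_abs (v x),
    abs_nonneg (u x), abs_nonneg (v x), abs_mul (u x) (v x)]

lemma mul_le_add_sq_div_two (a b : ℝ) : a * b ≤ (a ^ 2 + b ^ 2) / 2 := by
  nlinarith [sq_nonneg (a - b)]

lemma scalar (ν : Fin n → Measure 𝒳) [∀ i, IsProbabilityMeasure (ν i)]
    (g : (Fin n → 𝒳) → ℝ) (hgm : Measurable g)
    (hg2 : Integrable (fun x => g x ^ 2) (Measure.pi ν)) :
    ∫ x, (g x - ∫ y, g y ∂(Measure.pi ν)) ^ 2 ∂(Measure.pi ν) ≤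
      (1 / 2) * ∑ i : Fin n, ∫ p : (Fin n → 𝒳) × (Fin n → 𝒳),
        (g p.1 - g (Function.update p.1 i (p.2 i))) ^ 2
        ∂((Measure.pi ν).prod (Measure.pi ν)) := by
  set μ := Measure.pi ν with hμ
  set π := μ.prod μ with hπd
  have mem2 : MemLp g 2 μ := (memLp_two_iff_integrable_sq hgm.aestronglyMeasurable).2 hg2
  have hgint : Integrable g μ := mem2.integrable one_le_two
  set m := ∫ y, g y ∂μ with hm
  have memF : ∀ s : Fin n → Bool, MemLp (fun p => g (F s p)) 2 π := fun s =>
    mem2.comp_measurePreserving (mp_F ν s)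
  have measF : ∀ s : Fin n → Bool, Measurable (fun p => g (F s p)) := fun s =>
    hgm.comp (measurable_F s)
  set G : ℕ → ℝ := fun j => ∫ p, g p.1 * g (F (slt j) p) ∂π with hG
  have step1 : ∫ x, (g x - m) ^ 2 ∂μ = (∫ x, g x ^ 2 ∂μ) - m ^ 2 := by
    have hrw : ∀ x, (g x - m) ^ 2 = g x ^ 2 - (2 * m) * g x + m ^ 2 := fun x => by ring
    simp_rw [hrw]
    have hint2 : Integrable (fun x => 2 * m * g x) μ := hgint.const_mul (2 * m)
    have hint1 : Integrable (fun x => g x ^ 2 - 2 * m * g x) μ := hg2.sub hint2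
    rw [integral_add hint1 (integrable_const _),
      integral_sub hg2 hint2, integral_const_mul, integral_const]
    simp only [probReal_univ, measure_univ, ENNReal.toReal_one, smul_eq_mul, one_mul, ← hm]
    ring
  have hG0 : G 0 = ∫ x, g x ^ 2 ∂μ := by
    have h1 : ∀ p : (Fin n → 𝒳) × (Fin n → 𝒳),
        g p.1 * g (F (slt 0) p) = g p.1 ^ 2 := by
      intro p; rw [F_slt_zero]; ring
    rw [hG]
    simp only [h1]
    exact mp_integral mp_fst (φ := fun x => g x ^ 2) (hgm.pow_const 2).aestronglyMeasurable
  have hGn : G n = m ^ 2 := by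
    have h1 : ∀ p : (Fin n → 𝒳) × (Fin n → 𝒳),
        g p.1 * g (F (slt n) p) = g p.1 * g p.2 := by
      intro p; rw [F_slt_n]
    rw [hG]
    simp only [h1]
    rw [hπd, integral_prod_mul (μ := μ) (ν := μ) g g, ← hm, pow_two]
  have key : ∀ i : Fin n, G (i : ℕ) - G ((i : ℕ) + 1) ≤
      (1 / 2) * ∫ p, (g p.1 - g (Function.update p.1 i (p.2 i))) ^ 2 ∂π := by
    intro i
    set u : ((Fin n → 𝒳) × (Fin n → 𝒳)) → ℝ := fun p => g p.1 - g (F (s1 i) p) with hu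
    set v : ((Fin n → 𝒳) × (Fin n → 𝒳)) → ℝ :=
      fun p => g (F (slt (i : ℕ)) p) - g (F (slt ((i : ℕ) + 1)) p) with hv
    have memfst : MemLp (fun p : (Fin n → 𝒳) × (Fin n → 𝒳) => g p.1) 2 π :=
      mem2.comp_measurePreserving mp_fst
    have memu : MemLp u 2 π := memfst.sub (memF (s1 i))
    have memv : MemLp v 2 π := (memF (slt (i : ℕ))).sub (memF (slt ((i : ℕ) + 1)))
    have measu : Measurable u := (hgm.comp measurable_fst).sub (measF (s1 i))
    have measv : Measurable v := (measF _).sub (measF _)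
    have intu2 : Integrable (fun p => u p ^ 2) π := (memLp_two_iff_integrable_sq memu.1).1 memu
    have intv2 : Integrable (fun p => v p ^ 2) π := (memLp_two_iff_integrable_sq memv.1).1 memv
    have hvu : ∀ p, v (T (slt (i : ℕ)) p) = u p := by
      intro p
      simp only [hv, hu, F_T_self, F_slt1_T_slt]
    have hc : ∫ p, u p ^ 2 ∂π = ∫ p, v p ^ 2 ∂π := by
      have h2 := mp_integral (mp_T ν (slt (i : ℕ))) (φ := fun p => v p ^ 2)
        ((measv.pow_const 2).aestronglyMeasurable)
      rw [← h2]
      simp only [hvu]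
      rfl
    have hprod1 : Integrable (fun p => g p.1 * v p) π := l2_mul_integrable memfst memv
    have hprod2 : Integrable (fun p => g (F (s1 i) p) * v p) π :=
      l2_mul_integrable (memF _) memv
    have hswap : ∫ p, g (F (s1 i) p) * v p ∂π = - ∫ p, g p.1 * v p ∂π := by
      have hcomp : ∀ p, g (T (s1 i) p).1 * v (T (s1 i) p) = - (g (F (s1 i) p) * v p) := by
        intro p
        have h1 : v (T (s1 i) p) = - v p := by
          simp only [hv, F_slt_T_s1, F_slt1_T_s1]; ring
        have h0 : (T (s1 i) p).1 = F (s1 i) p := rfl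
        rw [h1, h0]; ring
      have h2 := mp_integral (mp_T ν (s1 i)) (φ := fun q => g q.1 * v q)
        (((hgm.comp measurable_fst).mul measv).aestronglyMeasurable)
      rw [← h2]
      simp only [hcomp]
      rw [integral_neg, neg_neg]
    have hGdiff : ∫ p, g p.1 * v p ∂π = G (i : ℕ) - G ((i : ℕ) + 1) := by
      have hexp2 : ∀ p : (Fin n → 𝒳) × (Fin n → 𝒳), g p.1 * v p =
          g p.1 * g (F (slt (i : ℕ)) p) - g p.1 * g (F (slt ((i : ℕ) + 1)) p) := fun p => by
        simp only [hv]; ring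
      simp_rw [hexp2]
      rw [integral_sub (l2_mul_integrable memfst (memF _)) (l2_mul_integrable memfst (memF _))]
    have ha : ∫ p, u p * v p ∂π = 2 * (G (i : ℕ) - G ((i : ℕ) + 1)) := by
      have hexp : ∀ p, u p * v p = g p.1 * v p - g (F (s1 i) p) * v p := fun p => by
        simp only [hu]; ring
      simp_rw [hexp]
      rw [integral_sub hprod1 hprod2, hswap, hGdiff]
      ring
    have hb : ∫ p, u p * v p ∂π ≤ ∫ p, u p ^ 2 ∂π := by
      have hmono : ∫ p, u p * v p ∂π ≤ ∫ p, (u p ^ 2 + v p ^ 2) / 2 ∂π := by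
        refine integral_mono (l2_mul_integrable memu memv)
          ((intu2.add intv2).div_const 2) fun p => ?_
        simp only [Pi.add_apply]
        exact mul_le_add_sq_div_two (u p) (v p)
      have heq : ∫ p, (u p ^ 2 + v p ^ 2) / 2 ∂π
          = ((∫ p, u p ^ 2 ∂π) + ∫ p, v p ^ 2 ∂π) / 2 := by
        rw [integral_div, integral_add intu2 intv2]
      rw [heq, ← hc] at hmono
      linarith
    have husq : (∫ p, u p ^ 2 ∂π)
        = ∫ p, (g p.1 - g (Function.update p.1 i (p.2 i))) ^ 2 ∂π := by
      have : ∀ p : (Fin n → 𝒳) × (Fin n → 𝒳),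
          u p ^ 2 = (g p.1 - g (Function.update p.1 i (p.2 i))) ^ 2 := by
        intro p; simp only [hu, F_s1]
      simp_rw [this]
    rw [← husq]
    linarith
  have tele : G 0 - G n = ∑ i : Fin n, (G (i : ℕ) - G ((i : ℕ) + 1)) := by
    rw [Fin.sum_univ_eq_sum_range (fun j => G j - G (j + 1)) n, Finset.sum_range_sub' G n]
  calc ∫ x, (g x - m) ^ 2 ∂μ = G 0 - G n := by rw [step1, hG0, hGn]
    _ = ∑ i : Fin n, (G (i : ℕ) - G ((i : ℕ) + 1)) := tele
    _ ≤ ∑ i : Fin n, (1 / 2) * ∫ p, (g p.1 - g (Function.update p.1 i (p.2 i))) ^ 2 ∂π :=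
        Finset.sum_le_sum fun i _ => key i
    _ = (1 / 2) * ∑ i : Fin n, ∫ p, (g p.1 - g (Function.update p.1 i (p.2 i))) ^ 2 ∂π :=
        (Finset.mul_sum _ _ _).symm

end EfronSteinAux



open EfronSteinAux in
/-- Vector Efron–Stein inequality: for `X = (X_1,…,X_n)` with independent coordinates
`X_i ∼ ν i` and independent copies `X_i' ∼ ν i`, and measurable `f : 𝒳^n → ℝ^d` with
`E‖f(X)‖² < ∞` (Euclidean norm, written as a sum of squares of coordinates),
`E‖f(X) - E f(X)‖² ≤ (1/2) Σ_i E‖f(X) - f(X^{(i)})‖²`. -/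
theorem stmt8 {𝒳 : Type*} [MeasurableSpace 𝒳] (n d : ℕ)
    (ν : Fin n → Measure 𝒳) (hν : ∀ i, IsProbabilityMeasure (ν i))
    (f : (Fin n → 𝒳) → (Fin d → ℝ)) (hf : Measurable f)
    (hf2 : Integrable (fun x => ∑ j, (f x j) ^ 2) (Measure.pi ν)) :
    (∫ x, ∑ j, (f x j - ∫ y, f y j ∂(Measure.pi ν)) ^ 2 ∂(Measure.pi ν)) ≤
      (1 / 2) * ∑ i : Fin n,
        ∫ p : (Fin n → 𝒳) × (Fin n → 𝒳),
          ∑ j, (f p.1 j - f (Function.update p.1 i (p.2 i)) j) ^ 2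
          ∂((Measure.pi ν).prod (Measure.pi ν)) := by
  haveI := hν
  have measg : ∀ j : Fin d, Measurable (fun x => f x j) := fun j =>
    (measurable_pi_apply j).comp hf
  have hgj2 : ∀ j : Fin d, Integrable (fun x => f x j ^ 2) (Measure.pi ν) := by
    intro j
    refine hf2.mono' ((measg j).pow_const 2).aestronglyMeasurable
      (Filter.Eventually.of_forall fun x => ?_)
    rw [Real.norm_eq_abs, abs_of_nonneg (sq_nonneg _)]
    exact Finset.single_le_sum (fun j' _ => sq_nonneg (f x j')) (Finset.mem_univ j)
  have memgj : ∀ j : Fin d, MemLp (fun x => f x j) 2 (Measure.pi ν) := fun j =>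
    (memLp_two_iff_integrable_sq (measg j).aestronglyMeasurable).2 (hgj2 j)
  have hLint : ∀ j : Fin d,
      Integrable (fun x => (f x j - ∫ y, f y j ∂(Measure.pi ν)) ^ 2) (Measure.pi ν) := by
    intro j
    have hmem : MemLp (fun x => f x j - ∫ y, f y j ∂(Measure.pi ν)) 2 (Measure.pi ν) :=
      (memgj j).sub (memLp_const _)
    exact (memLp_two_iff_integrable_sq hmem.1).1 hmem
  have hRint : ∀ (i : Fin n) (j : Fin d),
      Integrable (fun p : (Fin n → 𝒳) × (Fin n → 𝒳) =>
        (f p.1 j - f (Function.update p.1 i (p.2 i)) j) ^ 2)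
        ((Measure.pi ν).prod (Measure.pi ν)) := by
    intro i j
    have h1 : MemLp (fun p : (Fin n → 𝒳) × (Fin n → 𝒳) => f p.1 j) 2
        ((Measure.pi ν).prod (Measure.pi ν)) :=
      (memgj j).comp_measurePreserving mp_fst
    have h2 : MemLp (fun p : (Fin n → 𝒳) × (Fin n → 𝒳) =>
        f (Function.update p.1 i (p.2 i)) j) 2 ((Measure.pi ν).prod (Measure.pi ν)) := by
      have h := (memgj j).comp_measurePreserving (mp_F ν (s1 i))
      simp only [Function.comp_def, F_s1] at h
      exact h
    have hmem := h1.sub h2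
    exact (memLp_two_iff_integrable_sq hmem.1).1 hmem
  rw [integral_finset_sum Finset.univ (fun j _ => hLint j)]
  have step := Finset.sum_le_sum (s := (Finset.univ : Finset (Fin d)))
    (fun j _ => scalar ν (fun x => f x j) (measg j) (hgj2 j))
  refine le_trans step ?_
  rw [← Finset.mul_sum, Finset.sum_comm]
  refine le_of_eq ?_
  congr 1
  refine Finset.sum_congr rfl fun i _ => ?_
  exact (integral_finset_sum Finset.univ (fun j _ => hRint i j)).symm
end

section
/- Let f : (ℝ^d)^n → ℝ^d be measurable and satisfy sup_{μ ∈ ℝ^d} E_{X ∼ N(μ, I_d)^⊗n} ‖f(X) - μ‖² ≤ C_MSE · d/n. Suppose a scalar averaging principle holds: there is a probability measure ν on ℝ and constant c_sc > 0 such that every scalar statistic g(Z_1,…,Z_n, W) of n i.i.d. N(θ,1) samples plus independent auxiliary randomness W (whose law is independent of θ) with sup_θ E[(g-θ)²] ≤ C_MSE·d/n satisfies ∫ Var_θ(g) dν(θ) ≥ c_sc/n. Then there exists μ* ∈ ℝ^d with Var_{μ*}(f) := E‖f(X) - E f(X)‖² ≥ c_sc · d/n. -/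
open MeasureTheory ProbabilityTheory

open Set

section Aux

lemma measurePreserving_update_aux {d : ℕ} (j : Fin d) (m : Fin d → Measure ℝ)
    [∀ k, IsProbabilityMeasure (m k)] (κ : Measure ℝ) [IsProbabilityMeasure κ] :
    MeasurePreserving (fun p : ℝ × (Fin d → ℝ) => Function.update p.2 j p.1)
      (κ.prod (Measure.pi m)) (Measure.pi (Function.update m j κ)) := by
  have hmeas : Measurable (fun p : ℝ × (Fin d → ℝ) => Function.update p.2 j p.1) :=
    measurable_update'.comp (measurable_snd.prodMk measurable_fst)
  haveI : ∀ k, IsProbabilityMeasure (Function.update m j κ k) := by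
    intro k
    rcases eq_or_ne k j with rfl | h
    · rwa [Function.update_self]
    · rw [Function.update_of_ne h]; infer_instance
  refine ⟨hmeas, ?_⟩
  refine (Measure.pi_eq fun s hs => ?_).symm
  rw [Measure.map_apply hmeas (MeasurableSet.univ_pi hs)]
  have hpre : (fun p : ℝ × (Fin d → ℝ) => Function.update p.2 j p.1) ⁻¹' (univ.pi s)
      = (s j) ×ˢ (univ.pi (Function.update s j univ)) := by
    ext ⟨z, w⟩
    simp only [mem_preimage, mem_pi, mem_univ, forall_true_left, mem_prod]
    constructor
    · intro h
      refine ⟨by simpa using h j, fun k => ?_⟩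
      rcases eq_or_ne k j with rfl | hk
      · simp
      · simpa [Function.update_of_ne hk] using h k
    · rintro ⟨h1, h2⟩ k
      rcases eq_or_ne k j with rfl | hk
      · simpa using h1
      · simpa [Function.update_of_ne hk] using h2 k
  rw [hpre, Measure.prod_prod, Measure.pi_pi]
  have e1 : ∀ k, m k (Function.update s j univ k)
      = Function.update (fun k => m k (s k)) j (m j univ) k := by
    intro k
    rcases eq_or_ne k j with rfl | hk
    · simp
    · simp [Function.update_of_ne hk]
  have e2 : ∀ k, (Function.update m j κ k) (s k)
      = Function.update (fun k => m k (s k)) j (κ (s j)) k := by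
    intro k
    rcases eq_or_ne k j with rfl | hk
    · simp
    · simp [Function.update_of_ne hk]
  simp only [e1, e2]
  rw [Finset.prod_update_of_mem (Finset.mem_univ j), Finset.prod_update_of_mem (Finset.mem_univ j)]
  simp [measure_univ]

lemma update_gauss_eq {d : ℕ} (j : Fin d) (θ : ℝ) (μ : Fin d → ℝ) :
    Function.update (fun k => gaussianReal (μ k) 1) j (gaussianReal θ 1)
      = fun k => gaussianReal (Function.update μ j θ k) 1 := by
  funext k
  rcases eq_or_ne k j with rfl | hk
  · simp
  · simp [Function.update_of_ne hk]

/-- The i.i.d. Gaussian product measure `N(μ, I_d)^{⊗ n}` on `(ℝ^d)^n`. -/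
noncomputable def Qm (n d : ℕ) (μ : Fin d → ℝ) : Measure (Fin n → Fin d → ℝ) :=
  Measure.pi fun _ : Fin n => Measure.pi fun k => gaussianReal (μ k) 1

instance Qm_prob (n d : ℕ) (μ : Fin d → ℝ) : IsProbabilityMeasure (Qm n d μ) := by
  unfold Qm; infer_instance

lemma mp_Phi (n d : ℕ) (j : Fin d) (θ : ℝ) (μ : Fin d → ℝ) :
    MeasurePreserving
      ((fun a : Fin n → ℝ × (Fin d → ℝ) => fun i => Function.update (a i).2 j (a i).1) ∘
        (MeasurableEquiv.arrowProdEquivProdArrow ℝ (Fin d → ℝ) (Fin n)).symm)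
      ((Measure.pi fun _ : Fin n => gaussianReal θ 1).prod (Qm n d μ))
      (Qm n d (Function.update μ j θ)) := by
  have h1 := (measurePreserving_arrowProdEquivProdArrow ℝ (Fin d → ℝ) (Fin n)
      (fun _ => gaussianReal θ 1)
      (fun _ => Measure.pi fun k => gaussianReal (μ k) 1)).symm
      (MeasurableEquiv.arrowProdEquivProdArrow ℝ (Fin d → ℝ) (Fin n))
  have h2 : ∀ _i : Fin n, MeasurePreserving
      (fun p : ℝ × (Fin d → ℝ) => Function.update p.2 j p.1)
      ((gaussianReal θ 1).prod (Measure.pi fun k => gaussianReal (μ k) 1))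
      (Measure.pi fun k => gaussianReal (Function.update μ j θ k) 1) := by
    intro _
    have h := measurePreserving_update_aux j (fun k => gaussianReal (μ k) 1) (gaussianReal θ 1)
    rwa [update_gauss_eq] at h
  exact (measurePreserving_pi _ _ h2).comp h1

lemma mp_nu {d : ℕ} (j : Fin d) (ν : Measure ℝ) [IsProbabilityMeasure ν] :
    MeasurePreserving (fun p : (Fin d → ℝ) × ℝ => Function.update p.1 j p.2)
      ((Measure.pi fun _ : Fin d => ν).prod ν) (Measure.pi fun _ : Fin d => ν) := by
  have h := (measurePreserving_update_aux j (fun _ : Fin d => ν) ν).comp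
    Measure.measurePreserving_swap
  have e : Function.update (fun _ : Fin d => ν) j ν = fun _ => ν := by
    funext k
    rcases eq_or_ne k j with rfl | hk
    · simp
    · simp [Function.update_of_ne hk]
  rw [e] at h
  exact h

lemma mp_shift (n d : ℕ) (μ : Fin d → ℝ) :
    MeasurePreserving (fun x : Fin n → Fin d → ℝ => fun i k => x i k + μ k)
      (Qm n d 0) (Qm n d μ) := by
  have inner : ∀ k : Fin d, MeasurePreserving (· + μ k)
      (gaussianReal 0 1) (gaussianReal (μ k) 1) := by
    intro k
    refine ⟨measurable_add_const _, ?_⟩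
    rw [gaussianReal_map_add_const]
    norm_num
  have row := measurePreserving_pi (fun _ : Fin d => gaussianReal 0 1)
    (fun k => gaussianReal (μ k) 1) inner
  exact measurePreserving_pi _ _ (fun _ : Fin n => row)

lemma var_le_aux {Ω : Type*} [MeasurableSpace Ω] (Q : Measure Ω) [IsProbabilityMeasure Q]
    (X : Ω → ℝ) (hX : AEStronglyMeasurable X Q) (c : ℝ)
    (h2 : Integrable (fun x => (X x - c) ^ 2) Q) :
    variance X Q ≤ ∫ x, (X x - c) ^ 2 ∂Q := by
  have hXc : MemLp (fun x => X x - c) 2 Q := by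
    refine (memLp_two_iff_integrable_sq (hX.sub aestronglyMeasurable_const)).2 ?_
    simpa [Pi.pow_apply] using h2
  have hXm : MemLp X 2 Q := by
    have h := hXc.add (memLp_const c)
    have : ((fun x => X x - c) + fun _ => c) = X := by funext x; simp
    rwa [this] at h
  rw [variance_eq_sub hXm]
  have hXint : Integrable X Q := hXm.integrable one_le_two
  have hXsq : Integrable (fun x => X x ^ 2) Q := by
    simpa [Pi.pow_apply] using hXm.integrable_sq
  have expand : ∫ x, (X x - c) ^ 2 ∂Q = ∫ x, X x ^ 2 ∂Q - 2 * c * ∫ x, X x ∂Q + c ^ 2 := by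
    have : ∀ x, (X x - c) ^ 2 = X x ^ 2 - 2 * c * X x + c ^ 2 := fun x => by ring
    simp_rw [this]
    have I1 : Integrable (fun x => X x ^ 2 - 2 * c * X x) Q := hXsq.sub (hXint.const_mul (2 * c))
    rw [integral_add I1 (integrable_const _),
      integral_sub hXsq (hXint.const_mul (2 * c)), integral_const_mul, integral_const]
    simp
  rw [expand, show Q[X ^ 2] = ∫ x, X x ^ 2 ∂Q from rfl]
  nlinarith [sq_nonneg ((∫ x, X x ∂Q) - c)]

lemma variance_comp_mp {α β : Type*} [MeasurableSpace α] [MeasurableSpace β]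
    {P : Measure α} {Q : Measure β} {T : α → β} (hT : MeasurePreserving T P Q)
    {X : β → ℝ} (hX : Measurable X) :
    variance (fun a => X (T a)) P = variance X Q := by
  have hint : ∫ a, X (T a) ∂P = ∫ b, X b ∂Q := by
    rw [← hT.map_eq, integral_map hT.aemeasurable hX.aestronglyMeasurable]
  rw [variance, variance, evariance, evariance, hint, ← hT.map_eq,
    lintegral_map (f := fun ω => ‖X ω - ∫ x, X x ∂Measure.map T P‖ₑ ^ 2)
      (((hX.sub measurable_const).enorm).pow_const 2)
      hT.measurable]

end Aux

section Main

variable {n d : ℕ} {f : (Fin n → (Fin d → ℝ)) → (Fin d → ℝ)}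

lemma term_int (hf : Measurable f)
    (hfint : ∀ μ : Fin d → ℝ, Integrable (fun x => ∑ j, (f x j - μ j) ^ 2) (Qm n d μ))
    (μ : Fin d → ℝ) (j : Fin d) :
    Integrable (fun x => (f x j - μ j) ^ 2) (Qm n d μ) := by
  have hfj : Measurable fun x : Fin n → Fin d → ℝ => f x j := (measurable_pi_apply j).comp hf
  refine (hfint μ).mono' (((hfj.sub measurable_const).pow_const 2).aestronglyMeasurable) ?_
  refine ae_of_all _ fun x => ?_
  rw [Real.norm_eq_abs, abs_of_nonneg (sq_nonneg _)]
  exact Finset.single_le_sum (f := fun k => (f x k - μ k) ^ 2)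
    (fun k _ => sq_nonneg _) (Finset.mem_univ j)

lemma memL2 (hf : Measurable f)
    (hfint : ∀ μ : Fin d → ℝ, Integrable (fun x => ∑ j, (f x j - μ j) ^ 2) (Qm n d μ))
    (μ : Fin d → ℝ) (j : Fin d) :
    MemLp (fun x => f x j) 2 (Qm n d μ) := by
  have hfj : Measurable fun x : Fin n → Fin d → ℝ => f x j := (measurable_pi_apply j).comp hf
  have h1 : MemLp (fun x => f x j - μ j) 2 (Qm n d μ) := by
    refine (memLp_two_iff_integrable_sq
      ((hfj.sub measurable_const).aestronglyMeasurable)).2 ?_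
    simpa [Pi.pow_apply] using term_int hf hfint μ j
  have h := h1.add (memLp_const (μ j))
  have e : ((fun x => f x j - μ j) + fun _ => μ j) = fun x => f x j := by funext x; simp
  rwa [e] at h

/-- coordinate variance as a function of the mean vector -/
noncomputable def Vv (n d : ℕ) (f : (Fin n → (Fin d → ℝ)) → (Fin d → ℝ)) (j : Fin d)
    (μ : Fin d → ℝ) : ℝ :=
  variance (fun x => f x j) (Qm n d μ)

lemma Vv_nonneg (j : Fin d) (μ : Fin d → ℝ) : 0 ≤ Vv n d f j μ :=
  variance_nonneg _ _

lemma Vv_le (hf : Measurable f)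
    (hfint : ∀ μ : Fin d → ℝ, Integrable (fun x => ∑ j, (f x j - μ j) ^ 2) (Qm n d μ))
    {CMSE : ℝ}
    (hmse : ∀ μ : Fin d → ℝ, (∫ x, ∑ j, (f x j - μ j) ^ 2 ∂(Qm n d μ)) ≤ CMSE * d / n)
    (j : Fin d) (μ : Fin d → ℝ) :
    Vv n d f j μ ≤ CMSE * d / n := by
  have hfj : Measurable fun x : Fin n → Fin d → ℝ => f x j := (measurable_pi_apply j).comp hf
  refine le_trans (var_le_aux (Qm n d μ) _ hfj.aestronglyMeasurable (μ j)
    (term_int hf hfint μ j)) (le_trans ?_ (hmse μ))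
  refine integral_mono (term_int hf hfint μ j) (hfint μ) fun x => ?_
  exact Finset.single_le_sum (f := fun k => (f x k - μ k) ^ 2)
    (fun k _ => sq_nonneg _) (Finset.mem_univ j)

lemma Vv_measurable (hf : Measurable f)
    (hfint : ∀ μ : Fin d → ℝ, Integrable (fun x => ∑ j, (f x j - μ j) ^ 2) (Qm n d μ))
    (j : Fin d) : Measurable (Vv n d f j) := by
  have hfj : Measurable fun x : Fin n → Fin d → ℝ => f x j := (measurable_pi_apply j).comp hf
  have hshift : Measurable fun p : (Fin d → ℝ) × (Fin n → Fin d → ℝ) =>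
      (fun i k => p.2 i k + p.1 k : Fin n → Fin d → ℝ) := by
    refine measurable_pi_lambda _ fun i => measurable_pi_lambda _ fun k => ?_
    exact ((measurable_pi_apply k).comp
      ((measurable_pi_apply i).comp measurable_snd)).add
      ((measurable_pi_apply k).comp measurable_fst)
  have hF : Measurable fun p : (Fin d → ℝ) × (Fin n → Fin d → ℝ) =>
      f (fun i k => p.2 i k + p.1 k) j := hfj.comp hshift
  have hrepr : Vv n d f j = fun μ =>
      (∫ x, (f (fun i k => x i k + μ k) j) ^ 2 ∂(Qm n d 0))
        - (∫ x, f (fun i k => x i k + μ k) j ∂(Qm n d 0)) ^ 2 := by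
    funext μ
    rw [Vv, variance_eq_sub (memL2 hf hfint μ j)]
    have hmp := mp_shift n d μ
    have e1 : ∫ x, (f x j) ^ 2 ∂(Qm n d μ) = ∫ x, (f (fun i k => x i k + μ k) j) ^ 2
        ∂(Qm n d 0) := by
      rw [← hmp.map_eq, integral_map hmp.aemeasurable
        ((hfj.pow_const 2).aestronglyMeasurable)]
    have e2 : ∫ x, f x j ∂(Qm n d μ) = ∫ x, f (fun i k => x i k + μ k) j ∂(Qm n d 0) := by
      rw [← hmp.map_eq, integral_map hmp.aemeasurable hfj.aestronglyMeasurable]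
    rw [show (Qm n d μ)[(fun x => f x j) ^ 2] = ∫ x, (f x j) ^ 2 ∂(Qm n d μ) from rfl,
      show (Qm n d μ)[fun x => f x j] = ∫ x, f x j ∂(Qm n d μ) from rfl, e1, e2]
  rw [hrepr]
  have m1 : Measurable fun μ : Fin d → ℝ =>
      ∫ x, (f (fun i k => x i k + μ k) j) ^ 2 ∂(Qm n d 0) :=
    (StronglyMeasurable.integral_prod_right'
      ((hF.pow_const 2).stronglyMeasurable)).measurable
  have m2 : Measurable fun μ : Fin d → ℝ =>
      ∫ x, f (fun i k => x i k + μ k) j ∂(Qm n d 0) :=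
    (StronglyMeasurable.integral_prod_right' (hF.stronglyMeasurable)).measurable
  exact m1.sub (m2.pow_const 2)

end Main

/-- Scalar-to-vector variance lifting principle. Suppose `f : (ℝ^d)^n → ℝ^d` is uniformly
MSE-accurate: `sup_μ E_{N(μ,I_d)^⊗n}‖f(X) - μ‖² ≤ C_MSE·d/n`, and suppose the scalar
averaging principle holds for a probability measure `ν` on `ℝ` and constant `c_sc > 0`:
every measurable scalar statistic `g(Z, W)` of `n` i.i.d. `N(θ,1)` samples `Z` together with
independent auxiliary randomness `W ∼ ρ` (whose law does not depend on `θ`), satisfying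
`sup_θ E[(g-θ)²] ≤ C_MSE·d/n`, has `∫ Var_θ(g) dν(θ) ≥ c_sc/n`. Then there exists
`μ* ∈ ℝ^d` with `Var_{μ*}(f) = E‖f(X) - E f(X)‖² ≥ c_sc·d/n`.
(Euclidean norms are written as sums of squares of coordinates.) -/
theorem stmt12 (n d : ℕ) (hn : 0 < n) (hd : 0 < d)
    (CMSE csc : ℝ) (hC : 0 < CMSE) (hcsc : 0 < csc)
    (ν : Measure ℝ) [IsProbabilityMeasure ν]
    (hsc : ∀ (W : Type) (mW : MeasurableSpace W) (ρ : Measure W),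
      IsProbabilityMeasure ρ →
      ∀ g : ((Fin n → ℝ) × W) → ℝ, Measurable g →
      (∀ θ : ℝ, Integrable (fun z => (g z - θ) ^ 2)
        ((Measure.pi fun _ : Fin n => gaussianReal θ 1).prod ρ)) →
      (∀ θ : ℝ, (∫ z, (g z - θ) ^ 2
        ∂((Measure.pi fun _ : Fin n => gaussianReal θ 1).prod ρ)) ≤ CMSE * d / n) →
      csc / n ≤ ∫ θ, variance g
        ((Measure.pi fun _ : Fin n => gaussianReal θ 1).prod ρ) ∂ν)
    (f : (Fin n → (Fin d → ℝ)) → (Fin d → ℝ)) (hf : Measurable f)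
    (hfint : ∀ μ : Fin d → ℝ, Integrable (fun x => ∑ j, (f x j - μ j) ^ 2)
      (Measure.pi fun _ : Fin n => Measure.pi fun j => gaussianReal (μ j) 1))
    (hmse : ∀ μ : Fin d → ℝ, (∫ x, ∑ j, (f x j - μ j) ^ 2
      ∂(Measure.pi fun _ : Fin n => Measure.pi fun j => gaussianReal (μ j) 1)) ≤
        CMSE * d / n) :
    ∃ μ : Fin d → ℝ,
      csc * d / n ≤
        ∫ x, ∑ j, (f x j -
            ∫ y, f y j ∂(Measure.pi fun _ : Fin n =>
              Measure.pi fun j' => gaussianReal (μ j') 1)) ^ 2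
          ∂(Measure.pi fun _ : Fin n => Measure.pi fun j => gaussianReal (μ j) 1) := by
  classical
  have hfj : ∀ j : Fin d, Measurable fun x : Fin n → Fin d → ℝ => f x j :=
    fun j => (measurable_pi_apply j).comp hf
  have hfint' : ∀ μ : Fin d → ℝ,
      Integrable (fun x => ∑ j, (f x j - μ j) ^ 2) (Qm n d μ) := hfint
  have hmse' : ∀ μ : Fin d → ℝ,
      (∫ x, ∑ j, (f x j - μ j) ^ 2 ∂(Qm n d μ)) ≤ CMSE * d / n := hmse
  -- key scalar step
  have key : ∀ (j : Fin d) (μ : Fin d → ℝ),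
      csc / n ≤ ∫ θ, Vv n d f j (Function.update μ j θ) ∂ν := by
    intro j μ
    set T : (Fin n → ℝ) × (Fin n → Fin d → ℝ) → (Fin n → Fin d → ℝ) :=
      (fun a : Fin n → ℝ × (Fin d → ℝ) => fun i => Function.update (a i).2 j (a i).1) ∘
        (MeasurableEquiv.arrowProdEquivProdArrow ℝ (Fin d → ℝ) (Fin n)).symm with hT
    have hTmp : ∀ θ : ℝ, MeasurePreserving T
        ((Measure.pi fun _ : Fin n => gaussianReal θ 1).prod (Qm n d μ))
        (Qm n d (Function.update μ j θ)) := fun θ => mp_Phi n d j θ μ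
    have hTm : Measurable T := (hTmp 0).measurable
    have hg : Measurable fun p : (Fin n → ℝ) × (Fin n → Fin d → ℝ) => f (T p) j :=
      (hfj j).comp hTm
    have hint2 : ∀ θ : ℝ, Integrable (fun z => (f (T z) j - θ) ^ 2)
        ((Measure.pi fun _ : Fin n => gaussianReal θ 1).prod (Qm n d μ)) := by
      intro θ
      have h0 : Integrable (fun x => (f x j - θ) ^ 2) (Qm n d (Function.update μ j θ)) := by
        have h := term_int hf hfint' (Function.update μ j θ) j
        rwa [Function.update_self] at h
      exact ((hTmp θ).integrable_comp
        (((hfj j).sub measurable_const).pow_const 2).aestronglyMeasurable).2 h0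
    have hbd : ∀ θ : ℝ, (∫ z, (f (T z) j - θ) ^ 2
        ∂((Measure.pi fun _ : Fin n => gaussianReal θ 1).prod (Qm n d μ)))
        ≤ CMSE * d / n := by
      intro θ
      have hval : (∫ z, (f (T z) j - θ) ^ 2
          ∂((Measure.pi fun _ : Fin n => gaussianReal θ 1).prod (Qm n d μ)))
          = ∫ x, (f x j - θ) ^ 2 ∂(Qm n d (Function.update μ j θ)) := by
        conv_rhs => rw [← (hTmp θ).map_eq]
        rw [integral_map (hTmp θ).aemeasurable (f := fun x => (f x j - θ) ^ 2)
          (((hfj j).sub measurable_const).pow_const 2).aestronglyMeasurable]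
      rw [hval]
      have e : (fun x : Fin n → Fin d → ℝ => (f x j - θ) ^ 2)
          = fun x => (f x j - Function.update μ j θ j) ^ 2 := by
        rw [Function.update_self]
      rw [e]
      refine le_trans (integral_mono (term_int hf hfint' _ j) (hfint' _) fun x => ?_)
        (hmse' (Function.update μ j θ))
      exact Finset.single_le_sum (f := fun k => (f x k - Function.update μ j θ k) ^ 2)
        (fun k _ => sq_nonneg _) (Finset.mem_univ j)
    have happ := hsc (Fin n → Fin d → ℝ) (by infer_instance) (Qm n d μ) (by infer_instance)
      (fun p => f (T p) j) hg hint2 hbd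
    refine le_trans happ (le_of_eq ?_)
    refine integral_congr_ae (ae_of_all _ fun θ => ?_)
    exact variance_comp_mp (hTmp θ) (hfj j)
  -- averaging over ν^⊗d
  have hVmeas : ∀ j : Fin d, Measurable (Vv n d f j) := fun j => Vv_measurable hf hfint' j
  have hVint : ∀ j : Fin d, Integrable (Vv n d f j) (Measure.pi fun _ : Fin d => ν) := by
    intro j
    refine Integrable.mono' (integrable_const (CMSE * d / n)) (hVmeas j).aestronglyMeasurable
      (ae_of_all _ fun μ => ?_)
    rw [Real.norm_eq_abs, abs_of_nonneg (Vv_nonneg j μ)]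
    exact Vv_le hf hfint' hmse' j μ
  have key2 : ∀ j : Fin d, csc / n ≤ ∫ μ, Vv n d f j μ ∂(Measure.pi fun _ : Fin d => ν) := by
    intro j
    have hmpν := mp_nu j ν
    have hup : Measurable fun p : (Fin d → ℝ) × ℝ => Function.update p.1 j p.2 :=
      measurable_update'
    have hVip : Integrable (fun p : (Fin d → ℝ) × ℝ => Vv n d f j (Function.update p.1 j p.2))
        ((Measure.pi fun _ : Fin d => ν).prod ν) := by
      refine Integrable.mono' (integrable_const (CMSE * d / n))
        ((hVmeas j).comp hup).aestronglyMeasurable (ae_of_all _ fun p => ?_)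
      rw [Real.norm_eq_abs, abs_of_nonneg (Vv_nonneg _ _)]
      exact Vv_le hf hfint' hmse' _ _
    have e1 : ∫ μ, Vv n d f j μ ∂(Measure.pi fun _ : Fin d => ν)
        = ∫ p, Vv n d f j (Function.update p.1 j p.2)
            ∂((Measure.pi fun _ : Fin d => ν).prod ν) := by
      conv_lhs => rw [← hmpν.map_eq]
      rw [integral_map hmpν.aemeasurable (hVmeas j).aestronglyMeasurable]
    rw [e1, integral_prod _ hVip]
    calc csc / n = ∫ _w, csc / (n : ℝ) ∂(Measure.pi fun _ : Fin d => ν) := by simp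
    _ ≤ _ := integral_mono (integrable_const _) hVip.integral_prod_left fun w => key j w
  -- sum over coordinates
  have hsum : csc * d / n ≤ ∫ μ, ∑ j, Vv n d f j μ ∂(Measure.pi fun _ : Fin d => ν) := by
    rw [integral_finset_sum _ fun j _ => hVint j]
    have e : csc * d / n = ∑ _j : Fin d, csc / (n : ℝ) := by
      rw [Finset.sum_const, Finset.card_univ, Fintype.card_fin, nsmul_eq_mul]
      ring
    rw [e]
    exact Finset.sum_le_sum fun j _ => key2 j
  obtain ⟨μ, hμ⟩ := exists_integral_le (integrable_finset_sum _ fun j _ => hVint j)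
  refine ⟨μ, ?_⟩
  have hfinal : ∑ j, Vv n d f j μ
      = ∫ x, ∑ j, (f x j - ∫ y, f y j ∂(Qm n d μ)) ^ 2 ∂(Qm n d μ) := by
    have hterm : ∀ j : Fin d, Integrable
        (fun x => (f x j - ∫ y, f y j ∂(Qm n d μ)) ^ 2) (Qm n d μ) := by
      intro j
      have h := ((memL2 hf hfint' μ j).sub
        (memLp_const (∫ y, f y j ∂(Qm n d μ)))).integrable_sq
      exact h
    rw [integral_finset_sum _ fun j _ => hterm j]
    refine Finset.sum_congr rfl fun j _ => ?_
    rw [Vv]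
    exact variance_eq_integral (hfj j).aemeasurable
  exact le_trans (le_trans hsum hμ) (le_of_eq hfinal)
end

section
/- Let f : {0,1}^n → ℝ satisfy sup_{p ∈ [0,1]} E_{X ∼ Bern(p)^⊗n} |f(X) - p| ≤ C/√n for a constant C > 0. Then for every η ∈ (0,1) with k = ⌊ηn⌋ ≥ 1 and all sufficiently large n (depending on C), there is a universal constant c > 0 such that sup_{p ∈ [0,1]} E_{X ∼ Bern(p)^⊗n}[S_η^f(X)] ≥ c·η, where S_η^f(x) := sup over y ∈ {0,1}^n with d_H(x,y) ≤ ⌊ηn⌋ of |f(y) - f(x)|. -/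
open scoped Classical

open Finset

noncomputable section Stmt16Aux

variable {n : ℕ}

def st16supp (x : Fin n → Bool) : Finset (Fin n) := Finset.univ.filter (fun i => x i = true)
def st16wt (x : Fin n → Bool) : ℕ := (st16supp x).card
def st16layer (n r : ℕ) : Finset (Fin n → Bool) := Finset.univ.filter (fun x => st16wt x = r)

lemma st16supp_ind (T : Finset (Fin n)) : st16supp (fun i => decide (i ∈ T)) = T := by
  ext i; simp [st16supp]

lemma st16layer_card (r : ℕ) : (st16layer n r).card = n.choose r := by
  have : (st16layer n r).card = (Finset.powersetCard r (Finset.univ : Finset (Fin n))).card := by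
    apply Finset.card_bij' (fun x _ => st16supp x) (fun T _ => fun i => decide (i ∈ T))
    · intro x hx
      simp only [st16layer, mem_filter] at hx
      simpa [Finset.mem_powersetCard_univ, st16wt] using hx.2
    · intro T hT
      simp only [Finset.mem_powersetCard_univ] at hT
      simp only [st16layer, Finset.mem_filter, Finset.mem_univ, true_and]
      rw [st16wt, st16supp_ind, hT]
    · intro x hx; ext i; simp [st16supp]
    · intro T hT; exact st16supp_ind T
  rw [this, Finset.card_powersetCard]; simp


lemma st16card_supersets {r r' : ℕ} (x : Fin n → Bool) (hx : st16wt x = r)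
    (hrr : r ≤ r') (hn : r' ≤ n) :
    (Finset.univ.filter fun y => st16wt y = r' ∧ ∀ i, x i = true → y i = true).card
      = (n - r).choose (r' - r) := by
  have : (Finset.univ.filter fun y => st16wt y = r' ∧ ∀ i, x i = true → y i = true).card
      = (Finset.powersetCard (r' - r) (st16supp x)ᶜ).card := by
    apply Finset.card_bij' (fun y _ => st16supp y \ st16supp x)
      (fun T _ => fun i => x i || decide (i ∈ T))
    · intro y hy
      simp only [mem_filter, mem_univ, true_and] at hy
      have hsub : st16supp x ⊆ st16supp y := by
        intro i hi; simp only [st16supp, mem_filter, mem_univ, true_and] at hi ⊢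
        exact hy.2 i hi
      rw [Finset.mem_powersetCard]
      constructor
      · intro i hi
        simp only [Finset.mem_sdiff] at hi
        simp [Finset.mem_compl, hi.2]
      · have hx' : (st16supp x).card = r := hx
        have hy1 : (st16supp y).card = r' := hy.1
        rw [Finset.card_sdiff_of_subset hsub, hx', hy1]
    · intro T hT
      rw [Finset.mem_powersetCard] at hT
      have hdisj : Disjoint (st16supp x) T := by
        rw [Finset.disjoint_right]; intro i hi
        have := hT.1 hi; simp only [Finset.mem_compl] at this; exact this
      simp only [mem_filter, mem_univ, true_and]
      constructor
      · have : st16supp (fun i => x i || decide (i ∈ T)) = st16supp x ∪ T := by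
          ext i; simp [st16supp]
        have hx' : (st16supp x).card = r := hx
        rw [st16wt, this, Finset.card_union_of_disjoint hdisj, hx', hT.2]
        omega
      · intro i hi; simp [hi]
    · intro y hy
      simp only [mem_filter, mem_univ, true_and] at hy
      ext i
      simp only [Finset.mem_sdiff, st16supp, mem_filter, mem_univ, true_and, Bool.or_eq_true,
        decide_eq_true_eq]
      by_cases hxi : x i = true
      · simp [hxi, hy.2 i hxi]
      · simp [hxi]
    · intro T hT
      rw [Finset.mem_powersetCard] at hT
      ext i
      simp only [st16supp, Finset.mem_sdiff, mem_filter, mem_univ, true_and, Bool.or_eq_true,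
        decide_eq_true_eq]
      constructor
      · rintro ⟨h1 | h1, h2⟩
        · exact absurd h1 h2
        · exact h1
      · intro hi
        have := hT.1 hi; simp only [Finset.mem_compl, st16supp, mem_filter, mem_univ,
          true_and] at this
        exact ⟨Or.inr hi, this⟩
  have hx' : (st16supp x).card = r := hx
  rw [this, Finset.card_powersetCard, Finset.card_compl, hx']
  simp

lemma st16card_subsets {r r' : ℕ} (y : Fin n → Bool) (hy : st16wt y = r') (hrr : r ≤ r') :
    (Finset.univ.filter fun x => st16wt x = r ∧ ∀ i, x i = true → y i = true).card
      = r'.choose r := by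
  have : (Finset.univ.filter fun x => st16wt x = r ∧ ∀ i, x i = true → y i = true).card
      = (Finset.powersetCard r (st16supp y)).card := by
    apply Finset.card_bij' (fun x _ => st16supp x) (fun T _ => fun i => decide (i ∈ T))
    · intro x hx
      simp only [mem_filter, mem_univ, true_and] at hx
      rw [Finset.mem_powersetCard]
      refine ⟨?_, hx.1⟩
      intro i hi
      simp only [st16supp, mem_filter, mem_univ, true_and] at hi ⊢
      exact hx.2 i hi
    · intro T hT
      rw [Finset.mem_powersetCard] at hT
      simp only [mem_filter, mem_univ, true_and]
      constructor
      · rw [st16wt, st16supp_ind, hT.2]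
      · intro i hi
        simp only [decide_eq_true_eq] at hi
        have := hT.1 hi
        simp only [st16supp, mem_filter, mem_univ, true_and] at this
        exact this
    · intro x hx; ext i; simp [st16supp]
    · intro T hT; exact st16supp_ind T
  have hy' : (st16supp y).card = r' := hy
  rw [this, Finset.card_powersetCard, hy']


def st16P (n r r' : ℕ) : Finset ((Fin n → Bool) × (Fin n → Bool)) :=
  Finset.univ.filter (fun q => st16wt q.1 = r ∧ st16wt q.2 = r' ∧ ∀ i, q.1 i = true → q.2 i = true)

lemma st16sumA {r r' : ℕ} (hrr : r ≤ r') (hn : r' ≤ n) (h : (Fin n → Bool) → ℝ) :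
    ∑ q ∈ st16P n r r', h q.1
      = ((n - r).choose (r' - r) : ℝ) * ∑ x ∈ st16layer n r, h x := by
  rw [Finset.sum_finset_product' (st16P n r r') (st16layer n r)
    (fun x => Finset.univ.filter (fun y => st16wt y = r' ∧ ∀ i, x i = true → y i = true))
    (fun q => by simp only [st16P, st16layer, Finset.mem_filter, Finset.mem_univ, true_and]) (f := fun x _ => h x)]
  rw [Finset.mul_sum]
  apply Finset.sum_congr rfl
  intro x hx
  simp only [st16layer, mem_filter, mem_univ, true_and] at hx
  rw [Finset.sum_const, st16card_supersets x hx hrr hn, nsmul_eq_mul]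

lemma st16sumB {r r' : ℕ} (hrr : r ≤ r') (h : (Fin n → Bool) → ℝ) :
    ∑ q ∈ st16P n r r', h q.2
      = (r'.choose r : ℝ) * ∑ y ∈ st16layer n r', h y := by
  rw [Finset.sum_finset_product_right' (st16P n r r') (st16layer n r')
    (fun y => Finset.univ.filter (fun x => st16wt x = r ∧ ∀ i, x i = true → y i = true))
    (fun q => by simp only [st16P, st16layer, Finset.mem_filter, Finset.mem_univ, true_and]; tauto) (f := fun _ y => h y)]
  rw [Finset.mul_sum]
  apply Finset.sum_congr rfl
  intro y hy
  simp only [st16layer, mem_filter, mem_univ, true_and] at hy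
  rw [Finset.sum_const, st16card_subsets y hy hrr, nsmul_eq_mul]


noncomputable def st16S (f : (Fin n → Bool) → ℝ) (k : ℕ) (x : Fin n → Bool) : ℝ :=
  ⨆ y : {y : Fin n → Bool // hammingDist x y ≤ k}, |f y.1 - f x|

instance st16inst (k : ℕ) (x : Fin n → Bool) :
    Nonempty {y : Fin n → Bool // hammingDist x y ≤ k} := ⟨⟨x, by simp⟩⟩

lemma st16S_ge (f : (Fin n → Bool) → ℝ) (k : ℕ) (x y : Fin n → Bool)
    (h : hammingDist x y ≤ k) : |f y - f x| ≤ st16S f k x := by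
  have hb : BddAbove (Set.range fun y : {y : Fin n → Bool // hammingDist x y ≤ k} =>
      |f y.1 - f x|) := Set.Finite.bddAbove (Set.finite_range _)
  exact le_ciSup hb ⟨y, h⟩

lemma st16S_nonneg (f : (Fin n → Bool) → ℝ) (k : ℕ) (x : Fin n → Bool) :
    0 ≤ st16S f k x := by
  have := st16S_ge f k x x (by simp)
  simpa using this

lemma st16hamming {r r' : ℕ} {q : (Fin n → Bool) × (Fin n → Bool)} (hq : q ∈ st16P n r r') :
    hammingDist q.1 q.2 = r' - r := by
  simp only [st16P, mem_filter, mem_univ, true_and] at hq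
  obtain ⟨h1, h2, h3⟩ := hq
  have hsub : st16supp q.1 ⊆ st16supp q.2 := by
    intro i hi; simp only [st16supp, mem_filter, mem_univ, true_and] at hi ⊢
    exact h3 i hi
  have : (Finset.univ.filter fun i => q.1 i ≠ q.2 i) = st16supp q.2 \ st16supp q.1 := by
    ext i
    simp only [mem_filter, mem_univ, true_and, Finset.mem_sdiff, st16supp, ne_eq]
    by_cases h : q.1 i = true
    · have := h3 i h; simp [h, this]
    · by_cases h' : q.2 i = true <;> simp_all
  rw [hammingDist]
  rw [show ({i | q.1 i ≠ q.2 i} : Finset (Fin n)) = Finset.univ.filter fun i => q.1 i ≠ q.2 i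
    from rfl, this, Finset.card_sdiff_of_subset hsub]
  have e1 : (st16supp q.1).card = r := h1
  have e2 : (st16supp q.2).card = r' := h2
  rw [e1, e2]

noncomputable def st16a (n : ℕ) (f : (Fin n → Bool) → ℝ) (r : ℕ) : ℝ :=
  (∑ x ∈ st16layer n r, f x) / (n.choose r)

lemma st16a_S_nonneg (f : (Fin n → Bool) → ℝ) (k r : ℕ) : 0 ≤ st16a n (st16S f k) r := by
  apply div_nonneg _ (by positivity)
  exact Finset.sum_nonneg fun x _ => st16S_nonneg f k x

lemma st16step (f : (Fin n → Bool) → ℝ) (k : ℕ) {r r' : ℕ}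
    (hrr : r ≤ r') (hn : r' ≤ n) (hk : r' - r ≤ k) :
    st16a n f r' - st16a n f r ≤ st16a n (st16S f k) r ∧
    st16a n f r' - st16a n f r ≤ st16a n (st16S f k) r' := by
  set N0 : ℕ := n.choose r with hN0def
  set N0' : ℕ := n.choose r' with hN0'def
  set N1 : ℕ := (n - r).choose (r' - r) with hN1def
  set N1' : ℕ := r'.choose r with hN1'def
  have hN0 : 0 < N0 := Nat.choose_pos (hrr.trans hn)
  have hN0' : 0 < N0' := Nat.choose_pos hn
  have hN1 : 0 < N1 := Nat.choose_pos (by omega)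
  have hN1' : 0 < N1' := Nat.choose_pos hrr
  have hident : (N1 : ℝ) * N0 = (N1' : ℝ) * N0' := by
    have hA := st16sumA (n := n) hrr hn (fun _ => (1 : ℝ))
    have hB := st16sumB (n := n) (r := r) (r' := r') hrr (fun _ => (1 : ℝ))
    rw [hA] at hB
    simpa [st16layer_card, mul_comm] using hB
  have hD : (0 : ℝ) < (N1 : ℝ) * N0 := by positivity
  -- pointwise bounds
  have hpt1 : ∀ q ∈ st16P n r r', f q.2 - f q.1 ≤ st16S f k q.1 := by
    intro q hq
    have := st16S_ge f k q.1 q.2 (by rw [st16hamming hq]; exact hk)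
    exact le_trans (le_abs_self _) this
  have hpt2 : ∀ q ∈ st16P n r r', f q.2 - f q.1 ≤ st16S f k q.2 := by
    intro q hq
    have hd : hammingDist q.2 q.1 ≤ k := by
      rw [hammingDist_comm, st16hamming hq]; exact hk
    have := st16S_ge f k q.2 q.1 hd
    calc f q.2 - f q.1 ≤ |f q.1 - f q.2| := by
          rw [abs_sub_comm]; exact le_abs_self _
      _ ≤ st16S f k q.2 := this
  have hsub : ∑ q ∈ st16P n r r', (f q.2 - f q.1)
      = (N1' : ℝ) * ∑ x ∈ st16layer n r', f x - (N1 : ℝ) * ∑ x ∈ st16layer n r, f x := by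
    rw [Finset.sum_sub_distrib, st16sumA hrr hn, st16sumB hrr]
  have key1 : (N1' : ℝ) * ∑ x ∈ st16layer n r', f x - (N1 : ℝ) * ∑ x ∈ st16layer n r, f x
      ≤ (N1 : ℝ) * ∑ x ∈ st16layer n r, st16S f k x := by
    rw [← hsub, ← st16sumA hrr hn (st16S f k)]
    exact Finset.sum_le_sum hpt1
  have key2 : (N1' : ℝ) * ∑ x ∈ st16layer n r', f x - (N1 : ℝ) * ∑ x ∈ st16layer n r, f x
      ≤ (N1' : ℝ) * ∑ x ∈ st16layer n r', st16S f k x := by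
    rw [← hsub, ← st16sumB hrr (st16S f k)]
    exact Finset.sum_le_sum hpt2
  have ea' : st16a n f r' = ((N1' : ℝ) * ∑ x ∈ st16layer n r', f x) / ((N1 : ℝ) * N0) := by
    rw [hident, st16a, mul_div_mul_left _ _ (by positivity : (N1' : ℝ) ≠ 0)]
  have ea : st16a n f r = ((N1 : ℝ) * ∑ x ∈ st16layer n r, f x) / ((N1 : ℝ) * N0) := by
    rw [st16a, mul_div_mul_left _ _ (by positivity : (N1 : ℝ) ≠ 0)]
  have eb : st16a n (st16S f k) r
      = ((N1 : ℝ) * ∑ x ∈ st16layer n r, st16S f k x) / ((N1 : ℝ) * N0) := by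
    rw [st16a, mul_div_mul_left _ _ (by positivity : (N1 : ℝ) ≠ 0)]
  have eb' : st16a n (st16S f k) r'
      = ((N1' : ℝ) * ∑ x ∈ st16layer n r', st16S f k x) / ((N1 : ℝ) * N0) := by
    rw [hident, st16a, mul_div_mul_left _ _ (by positivity : (N1' : ℝ) ≠ 0)]
  have hinv : (0 : ℝ) ≤ ((N1 : ℝ) * N0)⁻¹ := le_of_lt (inv_pos.mpr hD)
  constructor
  · rw [ea, ea', eb, div_sub_div_same]
    have := mul_le_mul_of_nonneg_right key1 hinv
    simpa [div_eq_mul_inv] using this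
  · rw [ea, ea', eb', div_sub_div_same]
    have := mul_le_mul_of_nonneg_right key2 hinv
    simpa [div_eq_mul_inv] using this


lemma st16chain (f : (Fin n → Bool) → ℝ) (k ℓ : ℕ)
    (hl1 : 1 ≤ ℓ) (hlk : ℓ ≤ k) (hln : ℓ ≤ n) :
    (ℓ : ℝ) * (st16a n f n - st16a n f 0)
      ≤ 2 * ∑ r ∈ Finset.range (n + 1), st16a n (st16S f k) r := by
  set a : ℕ → ℝ := st16a n f with ha
  set b : ℕ → ℝ := st16a n (st16S f k) with hb
  -- Step A
  have hA : ∑ r ∈ Finset.range n, (a (min (r + ℓ) n) - a r) ≤ ∑ r ∈ Finset.range n, b r := by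
    apply Finset.sum_le_sum
    intro r hr
    rw [Finset.mem_range] at hr
    exact (st16step f k (le_min (Nat.le_add_right r ℓ) hr.le)
      (min_le_right _ _) (by omega)).1
  -- Step B: reindexing identity
  have hB : ∑ r ∈ Finset.range n, (a (min (r + ℓ) n) - a r)
      = (ℓ : ℝ) * a n - ∑ r ∈ Finset.range ℓ, a r := by
    rw [Finset.sum_sub_distrib]
    have e1 : ∑ r ∈ Finset.range n, a (min (r + ℓ) n)
        = (∑ j ∈ Finset.Ico ℓ n, a j) + (ℓ : ℝ) * a n := by
      have hsplit : ∑ r ∈ Finset.Ico 0 (n - ℓ + 1), a (min (r + ℓ) n)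
            + ∑ r ∈ Finset.Ico (n - ℓ + 1) n, a (min (r + ℓ) n)
          = ∑ r ∈ Finset.Ico 0 n, a (min (r + ℓ) n) :=
        Finset.sum_Ico_consecutive _ (by omega) (by omega)
      rw [← Finset.range_eq_Ico, ← Finset.range_eq_Ico] at hsplit
      rw [← hsplit]
      have e2 : ∑ r ∈ Finset.range (n - ℓ + 1), a (min (r + ℓ) n)
          = ∑ j ∈ Finset.Ico ℓ (n + 1), a j := by
        rw [Finset.sum_Ico_eq_sum_range]
        have : n + 1 - ℓ = n - ℓ + 1 := by omega
        rw [this]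
        apply Finset.sum_congr rfl
        intro r hr
        rw [Finset.mem_range] at hr
        congr 1
        omega
      have e3 : ∑ r ∈ Finset.Ico (n - ℓ + 1) n, a (min (r + ℓ) n)
          = ((ℓ : ℝ) - 1) * a n := by
        have hcongr : ∀ r ∈ Finset.Ico (n - ℓ + 1) n, a (min (r + ℓ) n) = a n := by
          intro r hr
          rw [Finset.mem_Ico] at hr
          congr 1
          omega
        rw [Finset.sum_congr rfl hcongr, Finset.sum_const, Nat.card_Ico, nsmul_eq_mul]
        congr 1
        have : n - (n - ℓ + 1) = ℓ - 1 := by omega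
        rw [this]
        push_cast [hl1]
        ring
      rw [e2, e3, Finset.sum_Ico_succ_top hln]
      push_cast
      ring
    have e4 : ∑ r ∈ Finset.range n, a r
        = (∑ r ∈ Finset.range ℓ, a r) + ∑ j ∈ Finset.Ico ℓ n, a j := by
      have := Finset.sum_Ico_consecutive a (Nat.zero_le ℓ) hln
      rw [Finset.range_eq_Ico, Finset.range_eq_Ico, ← this]
    rw [e1, e4]
    ring
  -- Step C
  have hC : ∑ r ∈ Finset.range ℓ, a r ≤ (ℓ : ℝ) * a 0 + ∑ r ∈ Finset.range ℓ, b r := by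
    have : ∀ r ∈ Finset.range ℓ, a r ≤ a 0 + b r := by
      intro r hr
      rw [Finset.mem_range] at hr
      have := (st16step f k (Nat.zero_le r) (by omega) (by omega)).2
      simp only [ha, hb] at this ⊢
      linarith
    calc ∑ r ∈ Finset.range ℓ, a r ≤ ∑ r ∈ Finset.range ℓ, (a 0 + b r) :=
          Finset.sum_le_sum this
      _ = (ℓ : ℝ) * a 0 + ∑ r ∈ Finset.range ℓ, b r := by
          rw [Finset.sum_add_distrib, Finset.sum_const, Finset.card_range, nsmul_eq_mul]
  have hbnn : ∀ r, 0 ≤ b r := fun r => st16a_S_nonneg f k r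
  have h1 : ∑ r ∈ Finset.range n, b r ≤ ∑ r ∈ Finset.range (n + 1), b r :=
    Finset.sum_le_sum_of_subset_of_nonneg
      (Finset.range_subset_range.mpr (by omega)) (fun r _ _ => hbnn r)
  have h2 : ∑ r ∈ Finset.range ℓ, b r ≤ ∑ r ∈ Finset.range (n + 1), b r :=
    Finset.sum_le_sum_of_subset_of_nonneg
      (Finset.range_subset_range.mpr (by omega)) (fun r _ _ => hbnn r)
  have := hB ▸ hA
  linarith


lemma st16prod (p : ℝ) (x : Fin n → Bool) :
    (∏ i, if x i then p else 1 - p) = p ^ st16wt x * (1 - p) ^ (n - st16wt x) := by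
  rw [← Finset.prod_filter_mul_prod_filter_not Finset.univ (fun i => x i = true)]
  congr 1
  · have hc : ∀ i ∈ Finset.univ.filter (fun i => x i = true),
        (if x i = true then p else 1 - p) = p := by
      intro i hi; rw [Finset.mem_filter] at hi; rw [if_pos hi.2]
    rw [Finset.prod_congr rfl hc, Finset.prod_const]
    rfl
  · have hc : ∀ i ∈ Finset.univ.filter (fun i => ¬ x i = true),
        (if x i = true then p else 1 - p) = 1 - p := by
      intro i hi; rw [Finset.mem_filter] at hi; rw [if_neg hi.2]
    rw [Finset.prod_congr rfl hc, Finset.prod_const]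
    congr 1
    have := Finset.card_filter_add_card_filter_not (s := (Finset.univ : Finset (Fin n)))
      (p := fun i => x i = true)
    have hn : (Finset.univ : Finset (Fin n)).card = n := by simp
    have hwt : (Finset.univ.filter (fun i => x i = true)).card = st16wt x := rfl
    omega

lemma st16beta (r m : ℕ) : (∫ p in (0:ℝ)..1, p ^ r * (1 - p) ^ m)
    = (r.factorial * m.factorial : ℝ) / (r + m + 1).factorial := by
  induction m generalizing r with
  | zero =>
    simp only [pow_zero, mul_one, integral_pow, one_pow, Nat.factorial_zero, Nat.cast_one,
      Nat.add_zero]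
    rw [Nat.factorial_succ]
    push_cast
    rw [zero_pow (by omega)]
    field_simp
    norm_num
  | succ m ih =>
    have hu : ∀ x ∈ Set.uIcc (0:ℝ) 1, HasDerivAt (fun y : ℝ => (1 - y) ^ (m + 1))
        (((m : ℝ) + 1) * (1 - x) ^ m * (-1)) x := by
      intro x _
      have h1 : HasDerivAt (fun y : ℝ => 1 - y) (-1) x := by
        simpa using (hasDerivAt_id x).const_sub (1:ℝ)
      have := h1.fun_pow (m + 1)
      simpa using this
    have hv : ∀ x ∈ Set.uIcc (0:ℝ) 1, HasDerivAt (fun y : ℝ => y ^ (r + 1))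
        (((r : ℝ) + 1) * x ^ r) x := by
      intro x _
      simpa using hasDerivAt_pow (r + 1) x
    have hu' : IntervalIntegrable (fun x : ℝ => ((m : ℝ) + 1) * (1 - x) ^ m * (-1))
        MeasureTheory.volume 0 1 := (Continuous.intervalIntegrable (by fun_prop) _ _)
    have hv' : IntervalIntegrable (fun x : ℝ => ((r : ℝ) + 1) * x ^ r)
        MeasureTheory.volume 0 1 := (Continuous.intervalIntegrable (by fun_prop) _ _)
    have key := intervalIntegral.integral_mul_deriv_eq_deriv_mul hu hv hu' hv'
    have l1 : (∫ x in (0:ℝ)..1, (1 - x) ^ (m + 1) * (((r : ℝ) + 1) * x ^ r))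
        = ((r : ℝ) + 1) * ∫ x in (0:ℝ)..1, x ^ r * (1 - x) ^ (m + 1) := by
      rw [← intervalIntegral.integral_const_mul]
      apply intervalIntegral.integral_congr
      intro x _
      ring
    have l2 : (∫ x in (0:ℝ)..1, (((m : ℝ) + 1) * (1 - x) ^ m * (-1)) * x ^ (r + 1))
        = -(((m : ℝ) + 1) * ∫ x in (0:ℝ)..1, x ^ (r + 1) * (1 - x) ^ m) := by
      rw [← intervalIntegral.integral_const_mul, ← intervalIntegral.integral_neg]
      apply intervalIntegral.integral_congr
      intro x _
      ring
    rw [l1, l2, ih (r + 1)] at key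
    simp only [sub_zero, one_pow, zero_pow, mul_zero, zero_mul, sub_self] at key
    -- key : (r+1) * ∫ = 0 - -( (m+1) * ((r+1)! * m! / (r+1+m+1)!) )
    have hr1 : ((r : ℝ) + 1) ≠ 0 := by positivity
    have hfact : ((r + 1 + m + 1).factorial : ℝ) = ((r + (m + 1) + 1).factorial : ℝ) := by
      rw [show r + 1 + m + 1 = r + (m + 1) + 1 from by omega]
    have e : (∫ x in (0:ℝ)..1, x ^ r * (1 - x) ^ (m + 1))
        = ((m : ℝ) + 1) * (((r + 1).factorial * m.factorial : ℝ) / (r + 1 + m + 1).factorial)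
          / ((r : ℝ) + 1) := by
      field_simp at key ⊢
      rw [zero_pow (by omega : m + 1 ≠ 0), zero_pow (by omega : r + 1 ≠ 0)] at key
      linarith [key]
    rw [e, hfact]
    rw [Nat.factorial_succ r, Nat.factorial_succ m]
    have hne : ((r + (m + 1) + 1).factorial : ℝ) ≠ 0 := by
      exact_mod_cast Nat.factorial_ne_zero _
    push_cast
    field_simp

lemma st16exists_max (g : ℝ → ℝ) (hg : Continuous g) (c : ℝ)
    (hint : c ≤ ∫ p in (0:ℝ)..1, g p) : ∃ p ∈ Set.Icc (0:ℝ) 1, c ≤ g p := by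
  obtain ⟨p₀, hp₀, hmax⟩ := (isCompact_Icc (a := (0:ℝ)) (b := 1)).exists_isMaxOn
    ⟨0, by norm_num⟩ hg.continuousOn
  refine ⟨p₀, hp₀, le_trans hint ?_⟩
  calc (∫ p in (0:ℝ)..1, g p) ≤ ∫ _p in (0:ℝ)..1, g p₀ := by
        apply intervalIntegral.integral_mono_on (by norm_num)
          (hg.intervalIntegrable 0 1) (intervalIntegrable_const)
        intro x hx
        exact hmax hx
    _ = g p₀ := by simp


lemma st16wt_zero_iff (x : Fin n → Bool) : st16wt x = 0 ↔ x = (fun _ => false) := by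
  constructor
  · intro h
    funext i
    by_contra hi
    have hx : x i = true := by
      cases hxi : x i
      · exact absurd hxi hi
      · rfl
    have : i ∈ Finset.univ.filter (fun j => x j = true) := by simp [hx]
    have hc : (Finset.univ.filter (fun j => x j = true)).card = 0 := h
    rw [Finset.card_eq_zero] at hc
    simp [hc] at this
  · intro h; subst h
    simp [st16wt, st16supp]

lemma st16wt_n_iff (x : Fin n → Bool) : st16wt x = n ↔ x = (fun _ => true) := by
  constructor
  · intro h
    have hc : (Finset.univ.filter (fun j => x j = true)).card
        = (Finset.univ : Finset (Fin n)).card := by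
      rw [Finset.card_univ, Fintype.card_fin]; exact h
    have := Finset.eq_univ_of_card _ hc
    funext i
    have h2 : i ∈ Finset.univ.filter (fun j => x j = true) := by
      rw [this]; exact Finset.mem_univ i
    simpa using h2
  · intro h; subst h
    simp [st16wt, st16supp]

lemma st16layer_zero : st16layer n 0 = {fun _ => false} := by
  ext x; simp [st16layer, st16wt_zero_iff]

lemma st16layer_n : st16layer n n = {fun _ => true} := by
  ext x; simp [st16layer, st16wt_n_iff]

lemma st16a_zero (f : (Fin n → Bool) → ℝ) : st16a n f 0 = f (fun _ => false) := by
  rw [st16a, st16layer_zero]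
  simp

lemma st16a_n (f : (Fin n → Bool) → ℝ) : st16a n f n = f (fun _ => true) := by
  rw [st16a, st16layer_n]
  simp

lemma st16eval_zero (h : (Fin n → Bool) → ℝ) :
    (∑ x : Fin n → Bool, (∏ i, if x i then (0:ℝ) else 1 - 0) * h x) = h (fun _ => false) := by
  rw [Finset.sum_eq_single (fun _ : Fin n => false)]
  · simp
  · intro x _ hx
    rw [st16prod]
    have : st16wt x ≠ 0 := fun hw => hx ((st16wt_zero_iff x).mp hw)
    rw [zero_pow this]
    simp
  · simp

lemma st16eval_one (h : (Fin n → Bool) → ℝ) :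
    (∑ x : Fin n → Bool, (∏ i, if x i then (1:ℝ) else 1 - 1) * h x) = h (fun _ => true) := by
  rw [Finset.sum_eq_single (fun _ : Fin n => true)]
  · simp [st16prod]
  · intro x _ hx
    rw [st16prod]
    have hle : st16wt x ≤ n := by
      have : (Finset.univ.filter (fun j => x j = true)).card ≤ Finset.univ.card :=
        Finset.card_filter_le _ _
      simpa [st16wt, st16supp] using this
    have : n - st16wt x ≠ 0 := by
      intro hw
      exact hx ((st16wt_n_iff x).mp (by omega))
    rw [sub_self, zero_pow this]
    simp
  · simp


lemma st16cont (x : Fin n → Bool) :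
    Continuous (fun p : ℝ => ∏ i, if x i then p else 1 - p) := by
  apply continuous_finset_prod
  intro i _
  by_cases h : x i = true
  · simp only [h, if_true]
    exact continuous_id
  · simp only [h, if_false]
    exact continuous_const.sub continuous_id

lemma st16integral (f : (Fin n → Bool) → ℝ) (k : ℕ) :
    (∫ p in (0:ℝ)..1, ∑ x : Fin n → Bool, (∏ i, if x i then p else 1 - p) * st16S f k x)
      = (∑ r ∈ Finset.range (n + 1), st16a n (st16S f k) r) / (n + 1) := by
  rw [intervalIntegral.integral_finset_sum (fun x _ =>
    Continuous.intervalIntegrable (show Continuous (fun p : ℝ => (∏ i, if x i then p else 1 - p)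
      * st16S f k x) from (st16cont x).mul continuous_const) _ _)]
  have e1 : ∀ x : Fin n → Bool,
      (∫ p in (0:ℝ)..1, (∏ i, if x i then p else 1 - p) * st16S f k x)
        = ((st16wt x).factorial * (n - st16wt x).factorial : ℝ) / (n + 1).factorial
          * st16S f k x := by
    intro x
    have : (∫ p in (0:ℝ)..1, (∏ i, if x i then p else 1 - p) * st16S f k x)
        = (∫ p in (0:ℝ)..1, p ^ st16wt x * (1 - p) ^ (n - st16wt x)) * st16S f k x := by
      rw [← intervalIntegral.integral_mul_const]
      apply intervalIntegral.integral_congr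
      intro p _
      show (∏ i, if x i then p else 1 - p) * st16S f k x
          = p ^ st16wt x * (1 - p) ^ (n - st16wt x) * st16S f k x
      rw [st16prod]
    have hle : st16wt x ≤ n := by
      have : (Finset.univ.filter (fun j => x j = true)).card ≤ Finset.univ.card :=
        Finset.card_filter_le _ _
      simpa [st16wt, st16supp] using this
    rw [this, st16beta, show st16wt x + (n - st16wt x) + 1 = n + 1 from by omega]
  rw [Finset.sum_congr rfl (fun x _ => e1 x)]
  -- group by weight
  have hmaps : ∀ x : Fin n → Bool, x ∈ Finset.univ → st16wt x ∈ Finset.range (n + 1) := by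
    intro x _
    rw [Finset.mem_range]
    have : (Finset.univ.filter (fun j => x j = true)).card ≤ Finset.univ.card :=
      Finset.card_filter_le _ _
    have h2 : st16wt x ≤ n := by simpa [st16wt, st16supp] using this
    omega
  rw [← Finset.sum_fiberwise_of_maps_to hmaps
    (fun x => ((st16wt x).factorial * (n - st16wt x).factorial : ℝ) / (n + 1).factorial
      * st16S f k x)]
  rw [Finset.sum_div]
  apply Finset.sum_congr rfl
  intro r hr
  rw [Finset.mem_range] at hr
  have hrn : r ≤ n := by omega
  have hlay : ∀ x ∈ st16layer n r,
      ((st16wt x).factorial * (n - st16wt x).factorial : ℝ) / (n + 1).factorial * st16S f k x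
        = (r.factorial * (n - r).factorial : ℝ) / (n + 1).factorial * st16S f k x := by
    intro x hx
    simp only [st16layer, mem_filter, mem_univ, true_and] at hx
    rw [hx]
  have : (Finset.univ.filter fun x : Fin n → Bool => st16wt x = r) = st16layer n r := rfl
  rw [this, Finset.sum_congr rfl hlay, ← Finset.mul_sum]
  -- now: r! (n-r)!/(n+1)! * Σ S = (Σ S / choose) / (n+1)
  have hch := Nat.choose_mul_factorial_mul_factorial hrn
  have hchpos : 0 < n.choose r := Nat.choose_pos hrn
  have hfac : ((n + 1).factorial : ℝ)
      = (n + 1) * (n.choose r * r.factorial * (n - r).factorial) := by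
    rw [Nat.factorial_succ, ← hch]
    push_cast
    ring
  rw [st16a, hfac]
  have h1 : (r.factorial : ℝ) ≠ 0 := by exact_mod_cast Nat.factorial_ne_zero r
  have h2 : ((n - r).factorial : ℝ) ≠ 0 := by exact_mod_cast Nat.factorial_ne_zero (n - r)
  have h3 : ((n : ℝ) + 1) ≠ 0 := by positivity
  have h4 : ((n.choose r : ℕ) : ℝ) ≠ 0 := by exact_mod_cast hchpos.ne'
  field_simp

end Stmt16Aux

/-- Empirical sensitivity lower bound for Bernoulli mean estimation: if
`sup_{p∈[0,1]} E_{Bern(p)^⊗n}|f(X) - p| ≤ C/√n`, then there is a constant `c > 0`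
(depending only on `C`) such that for all sufficiently large `n`, every `η ∈ (0,1)` with
`⌊ηn⌋ ≥ 1` satisfies `sup_{p∈[0,1]} E_{Bern(p)^⊗n}[S_η^f(X)] ≥ c·η`, where
`S_η^f(x) = sup_{y : d_H(x,y) ≤ ⌊ηn⌋} |f(y) - f(x)|`. Expectations over `Bern(p)^⊗n`
are written as explicit finite sums. -/
theorem stmt16 (C : ℝ) (hC : 0 < C) :
    ∃ c : ℝ, 0 < c ∧ ∃ N : ℕ, ∀ n : ℕ, N ≤ n →
    ∀ f : (Fin n → Bool) → ℝ,
    (∀ p : ℝ, p ∈ Set.Icc (0 : ℝ) 1 →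
      (∑ x : Fin n → Bool, (∏ i, if x i then p else 1 - p) * |f x - p|) ≤
        C / Real.sqrt n) →
    ∀ η : ℝ, η ∈ Set.Ioo (0 : ℝ) 1 → 1 ≤ ⌊η * n⌋₊ →
    ∃ p ∈ Set.Icc (0 : ℝ) 1,
      c * η ≤ ∑ x : Fin n → Bool, (∏ i, if x i then p else 1 - p) *
        (⨆ y : {y : Fin n → Bool // hammingDist x y ≤ ⌊η * n⌋₊}, |f y.1 - f x|) := by
  refine ⟨1/16, by norm_num, ⌈(4 * C)^2⌉₊ + 1, ?_⟩
  intro n hn f hf η hη hk1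
  set k := ⌊η * (n : ℝ)⌋₊ with hkdef
  obtain ⟨hη0, hη1⟩ := hη
  have hn1 : 1 ≤ n := le_trans (by omega) hn
  have hnR : (1 : ℝ) ≤ (n : ℝ) := by exact_mod_cast hn1
  have hnpos : (0 : ℝ) < (n : ℝ) := by linarith
  -- endpoint bounds
  have h0 := hf 0 (by norm_num)
  have h1 := hf 1 (by norm_num)
  rw [st16eval_zero (fun x => |f x - 0|)] at h0
  rw [st16eval_one (fun x => |f x - 1|)] at h1
  -- C / sqrt n ≤ 1/4
  have hsq : 4 * C ≤ Real.sqrt n := by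
    rw [show (4 * C) = Real.sqrt ((4 * C)^2) by rw [Real.sqrt_sq (by positivity)]]
    apply Real.sqrt_le_sqrt
    calc (4 * C)^2 ≤ (⌈(4 * C)^2⌉₊ : ℝ) := Nat.le_ceil _
      _ ≤ (n : ℝ) := by
          have : (⌈(4 * C)^2⌉₊ : ℕ) ≤ n := by omega
          exact_mod_cast this
  have hsqpos : (0 : ℝ) < Real.sqrt n := by
    apply Real.sqrt_pos.mpr hnpos
  have hCn : C / Real.sqrt n ≤ 1/4 := by
    rw [div_le_div_iff₀ hsqpos (by norm_num)]
    linarith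
  -- gap between endpoints
  have hgap : (1 : ℝ) / 2 ≤ st16a n f n - st16a n f 0 := by
    rw [st16a_n, st16a_zero]
    have ha := abs_le.mp h0
    have hb := abs_le.mp h1
    simp only [sub_zero] at ha
    have := ha.2
    have := hb.1
    linarith [ha.2, hb.1, hCn]
  -- k bounds
  have hkn : k ≤ n := by
    have hle : η * (n : ℝ) ≤ (n : ℝ) := by nlinarith
    calc k ≤ ⌊(n : ℝ)⌋₊ := Nat.floor_mono hle
      _ = n := Nat.floor_natCast n
  have hkR : η * n / 2 ≤ (k : ℝ) := by
    have hfl : η * n - 1 < (k : ℝ) := by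
      have := Nat.sub_one_lt_floor (η * (n : ℝ))
      exact_mod_cast this
    have h1k : (1 : ℝ) ≤ (k : ℝ) := by exact_mod_cast hk1
    rcases le_or_gt 2 (η * n) with h | h
    · linarith
    · linarith
  -- chain bound
  have hch := st16chain f k k hk1 le_rfl hkn
  have hknn : (0 : ℝ) ≤ (k : ℝ) := Nat.cast_nonneg k
  have hB : η * n / 8 ≤ ∑ r ∈ Finset.range (n + 1), st16a n (st16S f k) r := by
    nlinarith [hch, hgap, hkR, hknn]
  -- integral bound
  have hint := st16integral f k
  have hg : Continuous (fun p : ℝ => ∑ x : Fin n → Bool,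
      (∏ i, if x i then p else 1 - p) * st16S f k x) := by
    apply continuous_finset_sum
    intro x _
    exact (st16cont x).mul continuous_const
  have hintge : 1/16 * η ≤ ∫ p in (0:ℝ)..1, ∑ x : Fin n → Bool,
      (∏ i, if x i then p else 1 - p) * st16S f k x := by
    rw [hint]
    rw [le_div_iff₀ (by positivity)]
    nlinarith [hB, mul_nonneg hη0.le (sub_nonneg.mpr hnR)]
  obtain ⟨p, hp, hcp⟩ := st16exists_max _ hg _ hintge
  exact ⟨p, hp, by simpa only [st16S] using hcp⟩
end
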